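/- arXiv:1709.01000 — 8 statements merged into one kernel-verified Lean document; each statement's English description precedes it below -/
import Mathlib

section
/- For all constants C_E ≥ 1, L ≥ 0, M ≥ 0 there exists C ≥ 0 such that the following holds. Let E be a real Banach space, A : E →L[ℝ] E with ‖exp(-tA)‖ ≤ C_E for all t ≥ 0, let g : E → E be Lipschitz continuous with constant L, let h > 0, and let u : ℝ → E be differentiable on [0,h] with u'(t) = -A(u t) + g(u t) on [0,h], t ↦ g(u t) continuous, u 0 = u₀, and ‖g(u s)‖ ≤ M for all s ∈ [0,h]. Then for every ζ ∈ [0,1], ‖u(ζh) - exp(-ζhA)(u₀) - h • ∫_{σ=0}^{ζ} exp(-(ζ-σ)hA)( g(exp(-σhA)(u₀)) ) dσ‖ ≤ C · h². -/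
/-- The operator exponential `exp(tA)` of a continuous linear operator. -/
noncomputable def opexp {E : Type*} [NormedAddCommGroup E] [NormedSpace ℝ E]
    [CompleteSpace E] (A : E →L[ℝ] E) (t : ℝ) : E →L[ℝ] E :=
  NormedSpace.exp (t • A)

lemma opexp_cont {E : Type} [NormedAddCommGroup E] [NormedSpace ℝ E] [CompleteSpace E]
    (A : E →L[ℝ] E) : Continuous (fun s : ℝ => opexp A s) :=
  continuous_iff_continuousAt.2 fun s => (hasDerivAt_exp_smul_const A s).continuousAt

lemma opexp_deriv {E : Type} [NormedAddCommGroup E] [NormedSpace ℝ E] [CompleteSpace E]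
    (A : E →L[ℝ] E) (t s : ℝ) :
    HasDerivAt (fun s : ℝ => opexp A (s - t)) (opexp A (s - t) * A) s :=
  HasDerivAt.comp_sub_const s t (hasDerivAt_exp_smul_const A (s - t))

/-- Duhamel formula. -/
lemma duhamel {E : Type} [NormedAddCommGroup E] [NormedSpace ℝ E] [CompleteSpace E]
    (A : E →L[ℝ] E) (g : E → E) (h : ℝ) (u : ℝ → E)
    (hderiv : ∀ t ∈ Set.Icc (0 : ℝ) h, HasDerivAt u (-(A (u t)) + g (u t)) t)
    (hgc : ContinuousOn (fun t => g (u t)) (Set.Icc (0 : ℝ) h))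
    (t : ℝ) (ht : t ∈ Set.Icc (0 : ℝ) h) :
    u t - opexp A (-t) (u 0) = ∫ s in (0 : ℝ)..t, opexp A (s - t) (g (u s)) := by
  obtain ⟨ht0, hth⟩ := ht
  have hsub : Set.uIcc (0:ℝ) t ⊆ Set.Icc (0:ℝ) h := by
    rw [Set.uIcc_of_le ht0]
    exact Set.Icc_subset_Icc le_rfl hth
  have key : ∀ s ∈ Set.uIcc (0:ℝ) t,
      HasDerivAt (fun s => opexp A (s - t) (u s)) (opexp A (s - t) (g (u s))) s := by
    intro s hs
    have hu := hderiv s (hsub hs)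
    have := (opexp_deriv A t s).clm_apply hu
    convert this using 1
    simp only [ContinuousLinearMap.mul_apply, ContinuousLinearMap.map_add,
      ContinuousLinearMap.map_neg]
    abel
  have hint : IntervalIntegrable (fun s => opexp A (s - t) (g (u s)))
      MeasureTheory.volume 0 t := by
    apply ContinuousOn.intervalIntegrable
    exact ((opexp_cont A).comp (continuous_id.sub continuous_const)).continuousOn.clm_apply
      (hgc.mono hsub)
  have := intervalIntegral.integral_eq_sub_of_hasDerivAt key hint
  rw [this]
  simp [opexp, zero_sub]

/-- First-order expansion of the exact solution of `u' + Au = g(u)` in terms of elementary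
integrals: `u(ζh) = exp(-ζhA)u₀ + h ∫₀^ζ exp(-(ζ-σ)hA) g(exp(-σhA)u₀) dσ + O(h²)`, with a
constant depending only on `C_E`, `L` and `M`. -/
theorem stmt_3 (C_E L M : ℝ) (hCE : 1 ≤ C_E) (hL : 0 ≤ L) (hM : 0 ≤ M) :
    ∃ C : ℝ, 0 ≤ C ∧
      ∀ (E : Type) [NormedAddCommGroup E] [NormedSpace ℝ E] [CompleteSpace E]
        (A : E →L[ℝ] E),
        (∀ t : ℝ, 0 ≤ t → ‖opexp A (-t)‖ ≤ C_E) →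
        ∀ g : E → E, LipschitzWith (Real.toNNReal L) g →
        ∀ h : ℝ, 0 < h →
        ∀ (u : ℝ → E) (u₀ : E),
          (∀ t ∈ Set.Icc (0 : ℝ) h, HasDerivAt u (-(A (u t)) + g (u t)) t) →
          ContinuousOn (fun t => g (u t)) (Set.Icc (0 : ℝ) h) →
          u 0 = u₀ →
          (∀ s ∈ Set.Icc (0 : ℝ) h, ‖g (u s)‖ ≤ M) →
          ∀ ζ ∈ Set.Icc (0 : ℝ) 1,
            ‖u (ζ * h) - opexp A (-(ζ * h)) u₀ -
              h • ∫ σ in (0 : ℝ)..ζ,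
                opexp A (-((ζ - σ) * h)) (g (opexp A (-(σ * h)) u₀))‖ ≤ C * h ^ 2 := by
  refine ⟨C_E ^ 2 * L * M, by positivity, ?_⟩
  intro E _ _ _ A hA g hg h hh u u₀ hderiv hgc hu0 hgM ζ hζ
  obtain ⟨hζ0, hζ1⟩ := hζ
  have hLcoe : ((Real.toNNReal L : NNReal) : ℝ) = L := Real.coe_toNNReal L hL
  -- pointwise bound on the deviation from the linear flow
  have hdev : ∀ t ∈ Set.Icc (0:ℝ) h, ‖u t - opexp A (-t) u₀‖ ≤ C_E * M * h := by
    intro t ht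
    rw [← hu0, duhamel A g h u hderiv hgc t ht]
    have hb : ∀ x ∈ Set.uIoc (0:ℝ) t, ‖opexp A (x - t) (g (u x))‖ ≤ C_E * M := by
      intro x hx
      rw [Set.uIoc_of_le ht.1] at hx
      have hx' : x ∈ Set.Icc (0:ℝ) h := ⟨le_of_lt hx.1, hx.2.trans ht.2⟩
      have h1 : ‖opexp A (x - t)‖ ≤ C_E := by
        have := hA (t - x) (by linarith [hx.2])
        rwa [neg_sub] at this
      calc ‖opexp A (x - t) (g (u x))‖ ≤ ‖opexp A (x - t)‖ * ‖g (u x)‖ :=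
            ContinuousLinearMap.le_opNorm _ _
        _ ≤ C_E * M := mul_le_mul h1 (hgM x hx') (norm_nonneg _) (by linarith)
    calc ‖∫ s in (0:ℝ)..t, opexp A (s - t) (g (u s))‖ ≤ C_E * M * |t - 0| :=
          intervalIntegral.norm_integral_le_of_norm_le_const hb
      _ ≤ C_E * M * h := by
          rw [sub_zero, abs_of_nonneg ht.1]
          exact mul_le_mul_of_nonneg_left ht.2 (by positivity)
  -- the point ζ h
  have htmem : ζ * h ∈ Set.Icc (0:ℝ) h := by
    constructor
    · positivity
    · nlinarith
  -- Duhamel at ζ h plus change of variables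
  have hcov : u (ζ * h) - opexp A (-(ζ * h)) u₀ =
      h • ∫ σ in (0:ℝ)..ζ, opexp A (σ * h - ζ * h) (g (u (σ * h))) := by
    rw [← hu0, duhamel A g h u hderiv hgc (ζ * h) htmem]
    rw [intervalIntegral.smul_integral_comp_mul_right
      (fun s => opexp A (s - ζ * h) (g (u s))) h]
    norm_num
  rw [hcov]
  -- integrability of both integrands
  have hcF : ContinuousOn (fun σ : ℝ => opexp A (σ * h - ζ * h) (g (u (σ * h)))) 
      (Set.uIcc (0:ℝ) ζ) := by
    have hmap : Set.MapsTo (fun σ : ℝ => σ * h) (Set.uIcc (0:ℝ) ζ) (Set.Icc (0:ℝ) h) := by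
      intro x hx
      rw [Set.uIcc_of_le hζ0] at hx
      have h1 : 0 ≤ x * h := mul_nonneg hx.1 hh.le
      have h2 : x * h ≤ h := by nlinarith [hx.2]
      exact ⟨h1, h2⟩
    exact (((opexp_cont A).comp ((continuous_id.mul continuous_const).sub
        continuous_const)).continuousOn).clm_apply
      (hgc.comp (continuous_id.mul continuous_const).continuousOn hmap)
  have hcG : ContinuousOn (fun σ : ℝ => opexp A (-((ζ - σ) * h)) (g (opexp A (-(σ * h)) u₀)))
      (Set.uIcc (0:ℝ) ζ) := by
    apply Continuous.continuousOn
    exact ((opexp_cont A).comp (by continuity)).clm_apply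
      (hg.continuous.comp (((opexp_cont A).comp (by continuity)).clm_apply continuous_const))
  have hiF := hcF.intervalIntegrable (μ := MeasureTheory.volume)
  have hiG := hcG.intervalIntegrable (μ := MeasureTheory.volume)
  rw [← smul_sub, ← intervalIntegral.integral_sub hiF hiG]
  -- final bound
  have hbound : ∀ σ ∈ Set.uIoc (0:ℝ) ζ,
      ‖opexp A (σ * h - ζ * h) (g (u (σ * h))) -
        opexp A (-((ζ - σ) * h)) (g (opexp A (-(σ * h)) u₀))‖ ≤ C_E * (L * (C_E * M * h)) := by
    intro σ hσ
    rw [Set.uIoc_of_le hζ0] at hσ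
    have hσ0 : 0 < σ := hσ.1
    have hσζ : σ ≤ ζ := hσ.2
    have heq : -((ζ - σ) * h) = σ * h - ζ * h := by ring
    rw [heq, ← ContinuousLinearMap.map_sub]
    have hop : ‖opexp A (σ * h - ζ * h)‖ ≤ C_E := by
      have := hA ((ζ - σ) * h) (by nlinarith)
      rwa [heq] at this
    have hgdiff : ‖g (u (σ * h)) - g (opexp A (-(σ * h)) u₀)‖ ≤ L * (C_E * M * h) := by
      have hlip := hg.dist_le_mul (u (σ * h)) (opexp A (-(σ * h)) u₀)
      rw [dist_eq_norm, dist_eq_norm, hLcoe] at hlip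
      have hd := hdev (σ * h) ⟨by positivity, by nlinarith⟩
      calc ‖g (u (σ * h)) - g (opexp A (-(σ * h)) u₀)‖
          ≤ L * ‖u (σ * h) - opexp A (-(σ * h)) u₀‖ := hlip
        _ ≤ L * (C_E * M * h) := mul_le_mul_of_nonneg_left hd hL
    calc ‖opexp A (σ * h - ζ * h) (g (u (σ * h)) - g (opexp A (-(σ * h)) u₀))‖
        ≤ ‖opexp A (σ * h - ζ * h)‖ * ‖g (u (σ * h)) - g (opexp A (-(σ * h)) u₀)‖ :=
          ContinuousLinearMap.le_opNorm _ _
      _ ≤ C_E * (L * (C_E * M * h)) :=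
          mul_le_mul hop hgdiff (norm_nonneg _) (by linarith)
  have hnorm := intervalIntegral.norm_integral_le_of_norm_le_const hbound
  rw [norm_smul, Real.norm_eq_abs, abs_of_pos hh]
  calc h * ‖∫ σ in (0:ℝ)..ζ, (opexp A (σ * h - ζ * h) (g (u (σ * h))) -
        opexp A (-((ζ - σ) * h)) (g (opexp A (-(σ * h)) u₀)))‖
      ≤ h * (C_E * (L * (C_E * M * h)) * |ζ - 0|) :=
        mul_le_mul_of_nonneg_left hnorm (le_of_lt hh)
    _ ≤ C_E ^ 2 * L * M * h ^ 2 := by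
        rw [sub_zero, abs_of_nonneg hζ0]
        have hK : 0 ≤ C_E ^ 2 * L * M * h ^ 2 := by positivity
        have heq : h * (C_E * (L * (C_E * M * h)) * ζ) = C_E ^ 2 * L * M * h ^ 2 * ζ := by ring
        rw [heq]
        nlinarith [hK, hζ1]
end

section
/- For all constants C_E ≥ 1 and M ≥ 0 there exists C ≥ 0 such that the following holds. Let E be a real Banach space, A : E →L[ℝ] E with ‖exp(-tA)‖ ≤ C_E for all t ≥ 0, and let g : E → E be twice continuously (Fréchet) differentiable with ‖g(x)‖ ≤ M, ‖g'(x)‖ ≤ M and ‖g''(x)‖ ≤ M for all x ∈ E. Let 0 < h ≤ 1 and let u : ℝ → E be differentiable on [0,h] with u'(t) = -A(u t) + g(u t) on [0,h] and u 0 = u₀. Writing g_σ = g(exp(-σhA)u₀) and g'_σ = g'(exp(-σhA)u₀), one has ‖u(h) - exp(-hA)u₀ - h • ∫_{σ=0}^{1} exp(-(1-σ)hA) g_σ dσ - h² • ∫_{σ=0}^{1} ∫_{η=0}^{σ} exp(-(1-σ)hA)( g'_σ ( exp(-(σ-η)hA) g_η ) ) dη dσ‖ ≤ C · h³. -/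
open MeasureTheory intervalIntegral Set

set_option synthInstance.maxHeartbeats 1000000
set_option maxHeartbeats 4000000

section Aux
variable {E : Type*} [NormedAddCommGroup E] [NormedSpace ℝ E] [CompleteSpace E]

lemma opexp_zero_apply (A : E →L[ℝ] E) (x : E) : opexp A 0 x = x := by
  simp [opexp, NormedSpace.exp_zero]

lemma opexp_comp (A : E →L[ℝ] E) (a b : ℝ) (x : E) :
    opexp A a (opexp A b x) = opexp A (a + b) x := by
  have hc : Commute (a • A) (b • A) := by
    show _ = _
    rw [smul_mul_smul_comm, smul_mul_smul_comm, mul_comm a b]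
  have : opexp A (a + b) = opexp A a * opexp A b := by
    let +nondep : NormedAlgebra ℚ (E →L[ℝ] E) := .restrictScalars ℚ ℝ _
    rw [opexp, add_smul, NormedSpace.exp_add_of_commute hc]; rfl
  rw [this]; rfl

lemma continuous_opexp (A : E →L[ℝ] E) : Continuous (fun t : ℝ => opexp A t) :=
  let +nondep : NormedAlgebra ℚ (E →L[ℝ] E) := .restrictScalars ℚ ℝ _
  NormedSpace.exp_continuous.comp (continuous_id.smul continuous_const)

lemma opexp_hasDerivAt_apply (A : E →L[ℝ] E) {u : ℝ → E} {d : E} {s : ℝ}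
    (hu : HasDerivAt u d s) :
    HasDerivAt (fun r => opexp A r (u r)) (opexp A s (A (u s)) + opexp A s d) s := by
  have h1 := hasDerivAt_exp_smul_const (𝕂 := ℝ) A s
  have h2 := h1.clm_apply hu
  simpa [opexp, ContinuousLinearMap.mul_apply] using h2

private theorem stmt4_key (C_E M : ℝ) (hCE : 1 ≤ C_E) (hM : 0 ≤ M)
    (A : E →L[ℝ] E)
    (hA : ∀ t : ℝ, 0 ≤ t → ‖opexp A (-t)‖ ≤ C_E)
    (g : E → E) (hg : ContDiff ℝ 2 g)
    (hg0 : ∀ x : E, ‖g x‖ ≤ M) (hg1 : ∀ x : E, ‖fderiv ℝ g x‖ ≤ M)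
    (hg2 : ∀ x : E, ‖iteratedFDeriv ℝ 2 g x‖ ≤ M)
    (h : ℝ) (hh0 : 0 < h) (hh1 : h ≤ 1)
    (u : ℝ → E) (u₀ : E)
    (hu : ∀ t ∈ Set.Icc (0 : ℝ) h, HasDerivAt u (-(A (u t)) + g (u t)) t)
    (hu0 : u 0 = u₀) :
    ‖u h - opexp A (-h) u₀ -
      h • (∫ σ in (0 : ℝ)..1,
        opexp A (-((1 - σ) * h)) (g (opexp A (-(σ * h)) u₀))) -
      h ^ 2 • (∫ σ in (0 : ℝ)..1, ∫ η in (0 : ℝ)..σ,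
        opexp A (-((1 - σ) * h))
          ((fderiv ℝ g (opexp A (-(σ * h)) u₀))
            (opexp A (-((σ - η) * h)) (g (opexp A (-(η * h)) u₀)))))‖
      ≤ (2 * C_E ^ 3 * M ^ 3) * h ^ 3 := by
  have hCE0 : (0:ℝ) ≤ C_E := le_trans zero_le_one hCE
  have hne : h ≠ 0 := ne_of_gt hh0
  set v : ℝ → E := fun s => opexp A (-s) u₀ with hv
  -- basic continuity
  have contv : Continuous v :=
    ((continuous_opexp A).comp continuous_neg).clm_apply continuous_const
  have contu : ContinuousOn u (Icc 0 h) := fun t ht =>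
    ((hu t ht).continuousAt).continuousWithinAt
  have contg : Continuous g := hg.continuous
  have contg' : Continuous (fderiv ℝ g) := hg.continuous_fderiv (by norm_num)
  have hgdiff : Differentiable ℝ g := hg.differentiable (by norm_num)
  -- norm bound for the semigroup
  have bnd : ∀ t : ℝ, 0 ≤ t → ∀ x : E, ‖opexp A (-t) x‖ ≤ C_E * ‖x‖ := by
    intro t ht x
    exact ((opexp A (-t)).le_opNorm x).trans
      (mul_le_mul_of_nonneg_right (hA t ht) (norm_nonneg x))
  -- bound for the derivative of g applied
  have bnd1 : ∀ y w : E, ‖(fderiv ℝ g y) w‖ ≤ M * ‖w‖ := fun y w =>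
    ((fderiv ℝ g y).le_opNorm w).trans
      (mul_le_mul_of_nonneg_right (hg1 y) (norm_nonneg w))
  -- Lipschitz bound for g
  have lipg : ∀ x y : E, ‖g x - g y‖ ≤ M * ‖x - y‖ := fun x y =>
    Convex.norm_image_sub_le_of_norm_fderiv_le (fun z _ => hgdiff z)
      (fun z _ => hg1 z) convex_univ (mem_univ y) (mem_univ x)
  -- Lipschitz bound for fderiv g
  have lipg' : ∀ x y : E, ‖fderiv ℝ g x - fderiv ℝ g y‖ ≤ M * ‖x - y‖ := by
    have hGdiff : Differentiable ℝ (iteratedFDeriv ℝ 1 g) :=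
      hg.differentiable_iteratedFDeriv (by norm_num)
    have hGbnd : ∀ z : E, ‖fderiv ℝ (iteratedFDeriv ℝ 1 g) z‖ ≤ M := by
      intro z; rw [norm_fderiv_iteratedFDeriv]; exact hg2 z
    have lipG : ∀ x y : E, ‖iteratedFDeriv ℝ 1 g x - iteratedFDeriv ℝ 1 g y‖ ≤ M * ‖x - y‖ :=
      fun x y => Convex.norm_image_sub_le_of_norm_fderiv_le (fun z _ => hGdiff z)
        (fun z _ => hGbnd z) convex_univ (mem_univ y) (mem_univ x)
    intro x y
    refine ContinuousLinearMap.opNorm_le_bound _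
      (le_trans (mul_nonneg hM (norm_nonneg _)) (le_refl _)) ?_
    intro w
    have e1 : (fderiv ℝ g x - fderiv ℝ g y) w
        = (iteratedFDeriv ℝ 1 g x - iteratedFDeriv ℝ 1 g y) (fun _ => w) := by
      simp [iteratedFDeriv_one_apply]
    rw [e1]
    calc ‖(iteratedFDeriv ℝ 1 g x - iteratedFDeriv ℝ 1 g y) (fun _ => w)‖
        ≤ ‖iteratedFDeriv ℝ 1 g x - iteratedFDeriv ℝ 1 g y‖ * ∏ _i : Fin 1, ‖w‖ :=
          (iteratedFDeriv ℝ 1 g x - iteratedFDeriv ℝ 1 g y).le_opNorm _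
      _ = ‖iteratedFDeriv ℝ 1 g x - iteratedFDeriv ℝ 1 g y‖ * ‖w‖ := by simp
      _ ≤ (M * ‖x - y‖) * ‖w‖ := mul_le_mul_of_nonneg_right (lipG x y) (norm_nonneg w)
  -- second order Taylor bound
  have taylor : ∀ x y : E, ‖g x - g y - (fderiv ℝ g y) (x - y)‖ ≤ M * (‖x - y‖ * ‖x - y‖) := by
    intro x y
    set L := fderiv ℝ g y with hL
    have hdF : ∀ z : E, HasFDerivAt (fun w => g w - L w) (fderiv ℝ g z - L) z :=
      fun z => ((hgdiff z).hasFDerivAt).sub (L.hasFDerivAt)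
    have hF' : ∀ z : E, fderiv ℝ (fun w => g w - L w) z = fderiv ℝ g z - L :=
      fun z => (hdF z).fderiv
    have seg : ∀ z ∈ segment ℝ y x, ‖fderiv ℝ (fun w => g w - L w) z‖ ≤ M * ‖x - y‖ := by
      intro z hz
      rw [hF']
      obtain ⟨a, b, ha, hb, hab, rfl⟩ := hz
      have hz' : a • y + b • x - y = b • (x - y) := by
        rw [show a = 1 - b by linarith]; module
      calc ‖fderiv ℝ g (a • y + b • x) - L‖ ≤ M * ‖a • y + b • x - y‖ := lipg' _ y
        _ ≤ M * ‖x - y‖ := by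
            rw [hz', norm_smul, Real.norm_eq_abs, abs_of_nonneg hb]
            have hb1 : b ≤ 1 := by linarith
            nlinarith [norm_nonneg (x - y), mul_nonneg hM (norm_nonneg (x - y))]
    have hmvt := Convex.norm_image_sub_le_of_norm_fderiv_le
      (fun z _ => (hdF z).differentiableAt) seg (convex_segment y x)
      (left_mem_segment ℝ y x) (right_mem_segment ℝ y x)
    have eF : (g x - L x) - (g y - L y) = g x - g y - L (x - y) := by
      rw [map_sub]; abel
    rw [eF] at hmvt
    calc ‖g x - g y - L (x - y)‖ ≤ (M * ‖x - y‖) * ‖x - y‖ := hmvt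
      _ = M * (‖x - y‖ * ‖x - y‖) := by ring
  -- Duhamel formula
  have duh : ∀ t ∈ Icc (0:ℝ) h,
      u t = v t + ∫ s in (0:ℝ)..t, opexp A (-(t - s)) (g (u s)) := by
    intro t ht
    obtain ⟨ht0, hth⟩ := ht
    have hsub : uIcc (0:ℝ) t ⊆ Icc 0 h := by
      rw [uIcc_of_le ht0]; exact Icc_subset_Icc le_rfl hth
    have hcont1 : ContinuousOn (fun s => opexp A s (g (u s))) (uIcc 0 t) :=
      ((continuous_opexp A).continuousOn).clm_apply
        (contg.comp_continuousOn (contu.mono hsub))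
    have hint : IntervalIntegrable (fun s => opexp A s (g (u s))) volume 0 t :=
      hcont1.intervalIntegrable
    have hderiv : ∀ s ∈ uIcc (0:ℝ) t,
        HasDerivAt (fun r => opexp A r (u r)) (opexp A s (g (u s))) s := by
      intro s hs
      have h1 := opexp_hasDerivAt_apply A (hu s (hsub hs))
      have h2 : opexp A s (A (u s)) + opexp A s (-(A (u s)) + g (u s))
          = opexp A s (g (u s)) := by
        rw [← map_add]
        congr 1
        abel
      rwa [h2] at h1
    have FTC := intervalIntegral.integral_eq_sub_of_hasDerivAt hderiv hint
    have e1 : opexp A (-t) (opexp A t (u t)) = u t := by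
      rw [opexp_comp, neg_add_cancel, opexp_zero_apply]
    have e2 : opexp A (-t) (∫ s in (0:ℝ)..t, opexp A s (g (u s)))
        = ∫ s in (0:ℝ)..t, opexp A (-(t - s)) (g (u s)) := by
      rw [← ContinuousLinearMap.intervalIntegral_comp_comm _ hint]
      apply intervalIntegral.integral_congr
      intro s _
      simp only
      rw [opexp_comp]
      congr 1
      ring
    have e3 : (∫ s in (0:ℝ)..t, opexp A (-(t - s)) (g (u s))) = u t - v t := by
      rw [← e2, FTC, map_sub, e1, hv]
      simp only
      congr 1
      rw [opexp_zero_apply, hu0]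
    rw [e3]
    abel
  -- a priori estimate
  have estuv : ∀ s ∈ Icc (0:ℝ) h, ‖u s - v s‖ ≤ C_E * M * s := by
    intro s hs
    have hd : u s - v s = ∫ r in (0:ℝ)..s, opexp A (-(s - r)) (g (u r)) := by
      rw [duh s hs]; abel
    rw [hd]
    have hb := intervalIntegral.norm_integral_le_of_norm_le_const
      (C := C_E * M) (f := fun r => opexp A (-(s - r)) (g (u r))) (a := 0) (b := s) ?_
    · calc ‖∫ r in (0:ℝ)..s, opexp A (-(s - r)) (g (u r))‖ ≤ C_E * M * |s - 0| := hb
        _ = C_E * M * s := by rw [sub_zero, abs_of_nonneg hs.1]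
    · intro r hr
      rw [uIoc_of_le hs.1] at hr
      have hr1 : 0 ≤ s - r := by linarith [hr.2]
      exact (bnd _ hr1 _).trans (mul_le_mul_of_nonneg_left (hg0 _) hCE0)
  have estuvh : ∀ s ∈ Icc (0:ℝ) h, ‖u s - v s‖ ≤ C_E * M * h := by
    intro s hs
    refine (estuv s hs).trans ?_
    have := hs.2
    nlinarith [mul_nonneg hCE0 hM]
  -- the function W
  set W : ℝ → E := fun s => ∫ r in (0:ℝ)..s, opexp A (-(s - r)) (g (v r)) with hW
  have contΦ : Continuous (fun r : ℝ => opexp A r (g (v r))) :=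
    (continuous_opexp A).clm_apply (contg.comp contv)
  have intΦ : ∀ a b : ℝ, IntervalIntegrable (fun r : ℝ => opexp A r (g (v r))) volume a b :=
    fun a b => contΦ.intervalIntegrable a b
  have Weq : ∀ s : ℝ, W s = opexp A (-s) (∫ r in (0:ℝ)..s, opexp A r (g (v r))) := by
    intro s
    rw [hW]
    simp only
    rw [← ContinuousLinearMap.intervalIntegral_comp_comm _ (intΦ 0 s)]
    apply intervalIntegral.integral_congr
    intro r _
    simp only
    rw [opexp_comp]
    congr 1
    ring
  have contW : Continuous W := by
    rw [funext Weq]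
    exact ((continuous_opexp A).comp continuous_neg).clm_apply
      (intervalIntegral.continuous_primitive intΦ 0)
  -- continuity of the integrand pieces
  have contf₁ : Continuous (fun s : ℝ => opexp A (-(h - s)) (g (v s))) :=
    ((continuous_opexp A).comp (continuous_const.sub continuous_id).neg).clm_apply
      (contg.comp contv)
  have contf₂ : Continuous (fun s : ℝ => opexp A (-(h - s)) ((fderiv ℝ g (v s)) (W s))) :=
    ((continuous_opexp A).comp (continuous_const.sub continuous_id).neg).clm_apply
      ((contg'.comp contv).clm_apply contW)
  -- change of variables for the first-order term
  have claim1 : h • (∫ σ in (0:ℝ)..1,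
        opexp A (-((1 - σ) * h)) (g (opexp A (-(σ * h)) u₀)))
      = ∫ s in (0:ℝ)..h, opexp A (-(h - s)) (g (v s)) := by
    have e : ∀ σ : ℝ, opexp A (-((1 - σ) * h)) (g (opexp A (-(σ * h)) u₀))
        = (fun s => opexp A (-(h - s)) (g (v s))) (σ * h) := by
      intro σ
      simp only [hv]
      congr 2
      ring
    rw [intervalIntegral.integral_congr (g := fun σ : ℝ =>
      (fun s => opexp A (-(h - s)) (g (v s))) (σ * h)) (fun σ _ => e σ)]
    rw [intervalIntegral.smul_integral_comp_mul_right
      (fun s => opexp A (-(h - s)) (g (v s))) h]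
    simp only [zero_mul, one_mul]
  -- change of variables for the second-order term
  set F : ℝ → ℝ → E := fun s r =>
    opexp A (-(h - s)) ((fderiv ℝ g (v s)) (opexp A (-(s - r)) (g (v r)))) with hF
  have inner : ∀ σ : ℝ, (h • ∫ η in (0:ℝ)..σ,
        opexp A (-((1 - σ) * h))
          ((fderiv ℝ g (opexp A (-(σ * h)) u₀))
            (opexp A (-((σ - η) * h)) (g (opexp A (-(η * h)) u₀)))))
      = ∫ r in (0:ℝ)..σ * h, F (σ * h) r := by
    intro σ
    have e : ∀ η : ℝ, opexp A (-((1 - σ) * h))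
          ((fderiv ℝ g (opexp A (-(σ * h)) u₀))
            (opexp A (-((σ - η) * h)) (g (opexp A (-(η * h)) u₀))))
        = F (σ * h) (η * h) := by
      intro η
      simp only [hF, hv]
      congr 3
      · ring
      · ring
    rw [intervalIntegral.integral_congr (g := fun η : ℝ => F (σ * h) (η * h))
      (fun η _ => e η)]
    rw [intervalIntegral.smul_integral_comp_mul_right (F (σ * h)) h]
    simp only [zero_mul]
  have Geqf₂ : ∀ s : ℝ, (∫ r in (0:ℝ)..s, F s r)
      = opexp A (-(h - s)) ((fderiv ℝ g (v s)) (W s)) := by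
    intro s
    have hintv : IntervalIntegrable (fun r => opexp A (-(s - r)) (g (v r))) volume 0 s := by
      apply Continuous.intervalIntegrable
      exact ((continuous_opexp A).comp (continuous_const.sub continuous_id).neg).clm_apply
        (contg.comp contv)
    have := ContinuousLinearMap.intervalIntegral_comp_comm
      ((opexp A (-(h - s))).comp (fderiv ℝ g (v s))) hintv
    simpa [hF, hW] using this
  have claim2 : h ^ 2 • (∫ σ in (0:ℝ)..1, ∫ η in (0:ℝ)..σ,
        opexp A (-((1 - σ) * h))
          ((fderiv ℝ g (opexp A (-(σ * h)) u₀))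
            (opexp A (-((σ - η) * h)) (g (opexp A (-(η * h)) u₀)))))
      = ∫ s in (0:ℝ)..h, opexp A (-(h - s)) ((fderiv ℝ g (v s)) (W s)) := by
    rw [pow_two, mul_smul]
    rw [← intervalIntegral.integral_smul]
    rw [intervalIntegral.integral_congr (g := fun σ : ℝ =>
      (fun s => ∫ r in (0:ℝ)..s, F s r) (σ * h)) (fun σ _ => inner σ)]
    rw [intervalIntegral.smul_integral_comp_mul_right (fun s => ∫ r in (0:ℝ)..s, F s r) h]
    simp only [zero_mul, one_mul]
    exact intervalIntegral.integral_congr (fun s _ => Geqf₂ s)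
  -- integrability on [0,h]
  have hIcc : uIcc (0:ℝ) h = Icc 0 h := uIcc_of_le hh0.le
  have conte : Continuous (fun s : ℝ => opexp A (-(h - s))) :=
    (continuous_opexp A).comp (continuous_const.sub continuous_id).neg
  have inta : IntervalIntegrable (fun s => opexp A (-(h - s)) (g (u s))) volume 0 h := by
    have hc : ContinuousOn (fun s => opexp A (-(h - s)) (g (u s))) (uIcc 0 h) :=
      conte.continuousOn.clm_apply (contg.comp_continuousOn (contu.mono hIcc.le))
    exact hc.intervalIntegrable
  have intf₁ := contf₁.intervalIntegrable (μ := volume) (0:ℝ) h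
  have intf₂ := contf₂.intervalIntegrable (μ := volume) (0:ℝ) h
  -- identity for the defect
  have iden : u h - opexp A (-h) u₀ -
      h • (∫ σ in (0:ℝ)..1,
        opexp A (-((1 - σ) * h)) (g (opexp A (-(σ * h)) u₀))) -
      h ^ 2 • (∫ σ in (0:ℝ)..1, ∫ η in (0:ℝ)..σ,
        opexp A (-((1 - σ) * h))
          ((fderiv ℝ g (opexp A (-(σ * h)) u₀))
            (opexp A (-((σ - η) * h)) (g (opexp A (-(η * h)) u₀)))))
      = ∫ s in (0:ℝ)..h, (opexp A (-(h - s)) (g (u s))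
          - opexp A (-(h - s)) (g (v s))
          - opexp A (-(h - s)) ((fderiv ℝ g (v s)) (W s))) := by
    rw [claim1, claim2, duh h ⟨hh0.le, le_rfl⟩,
      intervalIntegral.integral_sub (inta.sub intf₁) intf₂,
      intervalIntegral.integral_sub inta intf₁]
    have hvh : v h = opexp A (-h) u₀ := rfl
    rw [← hvh]
    abel
  rw [iden]
  -- pointwise bound on the defect integrand
  have ptwise : ∀ s ∈ Set.uIoc (0:ℝ) h,
      ‖opexp A (-(h - s)) (g (u s)) - opexp A (-(h - s)) (g (v s))
        - opexp A (-(h - s)) ((fderiv ℝ g (v s)) (W s))‖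
      ≤ 2 * C_E ^ 3 * M ^ 3 * h ^ 2 := by
    intro s hs
    rw [uIoc_of_le hh0.le] at hs
    have hsIcc : s ∈ Icc (0:ℝ) h := ⟨hs.1.le, hs.2⟩
    -- representation of u s - v s - W s
    have intau : IntervalIntegrable (fun r => opexp A (-(s - r)) (g (u r))) volume 0 s := by
      have hsub2 : uIcc (0:ℝ) s ⊆ Icc 0 h := by
        rw [uIcc_of_le hs.1.le]
        exact Icc_subset_Icc le_rfl hs.2
      have hc : ContinuousOn (fun r => opexp A (-(s - r)) (g (u r))) (uIcc 0 s) :=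
        ((continuous_opexp A).comp
          (continuous_const.sub continuous_id).neg).continuousOn.clm_apply
          (contg.comp_continuousOn (contu.mono hsub2))
      exact hc.intervalIntegrable
    have intav : IntervalIntegrable (fun r => opexp A (-(s - r)) (g (v r))) volume 0 s :=
      (((continuous_opexp A).comp
        (continuous_const.sub continuous_id).neg).clm_apply
          (contg.comp contv)).intervalIntegrable 0 s
    have hzrep : u s - v s - W s
        = ∫ r in (0:ℝ)..s, (opexp A (-(s - r)) (g (u r)) - opexp A (-(s - r)) (g (v r))) := by
      have h1 : u s - v s = ∫ r in (0:ℝ)..s, opexp A (-(s - r)) (g (u r)) := by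
        rw [duh s hsIcc]; abel
      rw [h1, hW, ← intervalIntegral.integral_sub intau intav]
    have hz : ‖u s - v s - W s‖ ≤ C_E * (M * (C_E * M * h)) * h := by
      rw [hzrep]
      have hb := intervalIntegral.norm_integral_le_of_norm_le_const
        (C := C_E * (M * (C_E * M * h)))
        (f := fun r => opexp A (-(s - r)) (g (u r)) - opexp A (-(s - r)) (g (v r)))
        (a := 0) (b := s) ?_
      · have habs : |s - (0:ℝ)| = s := by rw [sub_zero, abs_of_nonneg hs.1.le]
        rw [habs] at hb
        refine hb.trans ?_
        have hc0 : 0 ≤ C_E * (M * (C_E * M * h)) := by positivity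
        exact mul_le_mul_of_nonneg_left hs.2 hc0
      · intro r hr
        rw [uIoc_of_le hs.1.le] at hr
        have hr1 : 0 ≤ s - r := by linarith [hr.2]
        have hrIcc : r ∈ Icc (0:ℝ) h := ⟨hr.1.le, hr.2.trans hs.2⟩
        show ‖opexp A (-(s - r)) (g (u r)) - opexp A (-(s - r)) (g (v r))‖ ≤ _
        rw [← map_sub]
        refine (bnd _ hr1 _).trans ?_
        refine mul_le_mul_of_nonneg_left ?_ hCE0
        refine (lipg _ _).trans ?_
        refine mul_le_mul_of_nonneg_left ?_ hM
        refine (estuv r hrIcc).trans ?_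
        have : r ≤ h := hr.2.trans hs.2
        nlinarith [mul_nonneg hCE0 hM]
    -- Taylor + remainder splitting
    have hX : ‖g (u s) - g (v s) - (fderiv ℝ g (v s)) (W s)‖
        ≤ 2 * C_E ^ 2 * M ^ 3 * h ^ 2 := by
      have split : g (u s) - g (v s) - (fderiv ℝ g (v s)) (W s)
          = (g (u s) - g (v s) - (fderiv ℝ g (v s)) (u s - v s))
            + (fderiv ℝ g (v s)) (u s - v s - W s) := by
        simp only [map_sub]; abel
      rw [split]
      have huvh := estuvh s hsIcc
      have t1 : ‖g (u s) - g (v s) - (fderiv ℝ g (v s)) (u s - v s)‖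
          ≤ M * ((C_E * M * h) * (C_E * M * h)) := by
        refine (taylor (u s) (v s)).trans ?_
        refine mul_le_mul_of_nonneg_left ?_ hM
        nlinarith [norm_nonneg (u s - v s), mul_nonneg (mul_nonneg hCE0 hM) hh0.le]
      have t2 : ‖(fderiv ℝ g (v s)) (u s - v s - W s)‖
          ≤ M * (C_E * (M * (C_E * M * h)) * h) :=
        (bnd1 _ _).trans (mul_le_mul_of_nonneg_left hz hM)
      calc ‖_ + _‖ ≤ _ := norm_add_le _ _
        _ ≤ M * ((C_E * M * h) * (C_E * M * h)) + M * (C_E * (M * (C_E * M * h)) * h) :=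
            add_le_add t1 t2
        _ = 2 * C_E ^ 2 * M ^ 3 * h ^ 2 := by ring
    have hcomb : opexp A (-(h - s)) (g (u s)) - opexp A (-(h - s)) (g (v s))
        - opexp A (-(h - s)) ((fderiv ℝ g (v s)) (W s))
        = opexp A (-(h - s)) (g (u s) - g (v s) - (fderiv ℝ g (v s)) (W s)) := by
      rw [map_sub, map_sub]
    rw [hcomb]
    have hhs : 0 ≤ h - s := by linarith [hs.2]
    refine (bnd _ hhs _).trans ?_
    calc C_E * ‖g (u s) - g (v s) - (fderiv ℝ g (v s)) (W s)‖
        ≤ C_E * (2 * C_E ^ 2 * M ^ 3 * h ^ 2) := mul_le_mul_of_nonneg_left hX hCE0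
      _ = 2 * C_E ^ 3 * M ^ 3 * h ^ 2 := by ring
  have final := intervalIntegral.norm_integral_le_of_norm_le_const ptwise
  refine final.trans ?_
  rw [sub_zero, abs_of_pos hh0]
  calc 2 * C_E ^ 3 * M ^ 3 * h ^ 2 * h = 2 * C_E ^ 3 * M ^ 3 * h ^ 3 := by ring
    _ ≤ 2 * C_E ^ 3 * M ^ 3 * h ^ 3 := le_rfl

end Aux


/-- Second-order expansion of the exact solution of `u' + Au = g(u)` along the flow of the
homogeneous problem: the exact solution agrees with `exp(-hA)u₀` plus the elementary
integrals of the trees of orders one and two up to `O(h³)`, with a constant depending only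
on `C_E` and `M`. -/
theorem stmt_4 (C_E M : ℝ) (hCE : 1 ≤ C_E) (hM : 0 ≤ M) :
    ∃ C : ℝ, 0 ≤ C ∧
      ∀ (E : Type) [NormedAddCommGroup E] [NormedSpace ℝ E] [CompleteSpace E]
        (A : E →L[ℝ] E),
        (∀ t : ℝ, 0 ≤ t → ‖opexp A (-t)‖ ≤ C_E) →
        ∀ g : E → E, ContDiff ℝ 2 g →
          (∀ x : E, ‖g x‖ ≤ M) →
          (∀ x : E, ‖fderiv ℝ g x‖ ≤ M) →
          (∀ x : E, ‖iteratedFDeriv ℝ 2 g x‖ ≤ M) →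
        ∀ h : ℝ, 0 < h → h ≤ 1 →
        ∀ (u : ℝ → E) (u₀ : E),
          (∀ t ∈ Set.Icc (0 : ℝ) h, HasDerivAt u (-(A (u t)) + g (u t)) t) →
          u 0 = u₀ →
          ‖u h - opexp A (-h) u₀ -
            h • (∫ σ in (0 : ℝ)..1,
              opexp A (-((1 - σ) * h)) (g (opexp A (-(σ * h)) u₀))) -
            h ^ 2 • (∫ σ in (0 : ℝ)..1, ∫ η in (0 : ℝ)..σ,
              opexp A (-((1 - σ) * h))
                ((fderiv ℝ g (opexp A (-(σ * h)) u₀))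
                  (opexp A (-((σ - η) * h)) (g (opexp A (-(η * h)) u₀)))))‖
            ≤ C * h ^ 3 := by
  have hCE0 : (0:ℝ) ≤ C_E := le_trans zero_le_one hCE
  refine ⟨2 * C_E ^ 3 * M ^ 3, ?_, ?_⟩
  · have := pow_nonneg hCE0 3
    have := pow_nonneg hM 3
    nlinarith
  · intro E _ _ _ A hA g hg hg0 hg1 hg2 h hh0 hh1 u u₀ hu hu0
    exact stmt4_key C_E M hCE hM A hA g hg hg0 hg1 hg2 h hh0 hh1 u u₀ hu hu0
end

section
/- For all constants C_E ≥ 1, L ≥ 0, M ≥ 0, s ∈ ℕ, and all Runge–Kutta coefficients b : Fin s → ℝ, c : Fin s → ℝ, a : Fin s → Fin s → ℝ with a i j = 0 whenever j ≥ i, there exists C ≥ 0 such that the following holds. Let E be a real Banach space, A : E →L[ℝ] E with ‖exp(-tA)‖ ≤ C_E for all t ∈ ℝ, let g : E → E be Lipschitz with constant L and satisfy ‖g(x)‖ ≤ M for all x ∈ E, let 0 < h ≤ 1 and u₀ ∈ E. Define the Lawson stages U_i = exp(-c_i hA)u₀ + h • ∑_{j<i} a_{ij} exp(-(c_i-c_j)hA)(g(U_j))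 and the step u₁ = exp(-hA)u₀ + h • ∑_{i} b_i exp(-(1-c_i)hA)(g(U_i)). Then ‖u₁ - exp(-hA)u₀ - h • ∑_i b_i exp(-(1-c_i)hA)( g(exp(-c_i hA)u₀) )‖ ≤ C · h². -/
/-- First-order expansion of one step of an `s`-stage Lawson method in terms of elementary
quadrature rules: `u₁ = exp(-hA)u₀ + h ∑ᵢ bᵢ exp(-(1-cᵢ)hA) g(exp(-cᵢhA)u₀) + O(h²)`,
with a constant depending only on `C_E`, `L`, `M` and the Runge–Kutta coefficients. -/
theorem stmt_5 (C_E L M : ℝ) (hCE : 1 ≤ C_E) (hL : 0 ≤ L) (hM : 0 ≤ M)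
    (s : ℕ) (b c : Fin s → ℝ) (a : Fin s → Fin s → ℝ)
    (ha : ∀ i j : Fin s, j ≥ i → a i j = 0) :
    ∃ C : ℝ, 0 ≤ C ∧
      ∀ (E : Type) [NormedAddCommGroup E] [NormedSpace ℝ E] [CompleteSpace E]
        (A : E →L[ℝ] E),
        (∀ t : ℝ, ‖opexp A (-t)‖ ≤ C_E) →
        ∀ g : E → E, LipschitzWith (Real.toNNReal L) g →
          (∀ x : E, ‖g x‖ ≤ M) →
        ∀ h : ℝ, 0 < h → h ≤ 1 →
        ∀ (u₀ : E) (U : Fin s → E) (u₁ : E),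
          (∀ i : Fin s, U i = opexp A (-(c i * h)) u₀ +
            h • ∑ j ∈ Finset.univ.filter (fun j => j < i),
              a i j • opexp A (-((c i - c j) * h)) (g (U j))) →
          u₁ = opexp A (-h) u₀ +
            h • ∑ i : Fin s, b i • opexp A (-((1 - c i) * h)) (g (U i)) →
          ‖u₁ - opexp A (-h) u₀ -
            h • ∑ i : Fin s,
              b i • opexp A (-((1 - c i) * h)) (g (opexp A (-(c i * h)) u₀))‖
            ≤ C * h ^ 2 := by
  refine ⟨C_E ^ 2 * L * M * ∑ i, |b i| * ∑ j, |a i j|, by positivity, ?_⟩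
  intro E _ _ _ A hA g hg hgM h hh h1 u₀ U u₁ hU hu₁
  have hCE0 : (0:ℝ) ≤ C_E := le_trans zero_le_one hCE
  have key : ∀ (t : ℝ) (x : E), ‖opexp A (-t) x‖ ≤ C_E * ‖x‖ := fun t x =>
    ((opexp A (-t)).le_opNorm x).trans
      (mul_le_mul_of_nonneg_right (hA t) (norm_nonneg x))
  have hglip : ∀ x y : E, ‖g x - g y‖ ≤ L * ‖x - y‖ := by
    intro x y
    have := hg.dist_le_mul x y
    rwa [dist_eq_norm, dist_eq_norm, Real.coe_toNNReal L hL] at this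
  have hstage : ∀ i : Fin s, ‖U i - opexp A (-(c i * h)) u₀‖
      ≤ h * (C_E * M * ∑ j, |a i j|) := by
    intro i
    rw [hU i, add_sub_cancel_left, norm_smul, Real.norm_of_nonneg hh.le]
    refine mul_le_mul_of_nonneg_left ?_ hh.le
    calc ‖∑ j ∈ Finset.univ.filter (fun j => j < i),
            a i j • opexp A (-((c i - c j) * h)) (g (U j))‖
        ≤ ∑ j ∈ Finset.univ.filter (fun j => j < i),
            ‖a i j • opexp A (-((c i - c j) * h)) (g (U j))‖ := norm_sum_le _ _
      _ ≤ ∑ j ∈ Finset.univ.filter (fun j => j < i), |a i j| * (C_E * M) := by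
          refine Finset.sum_le_sum fun j _ => ?_
          rw [norm_smul, Real.norm_eq_abs]
          exact mul_le_mul_of_nonneg_left
            ((key _ _).trans (mul_le_mul_of_nonneg_left (hgM _) hCE0)) (abs_nonneg _)
      _ ≤ ∑ j, |a i j| * (C_E * M) :=
          Finset.sum_le_sum_of_subset_of_nonneg (Finset.filter_subset _ _)
            (fun j _ _ => by positivity)
      _ = C_E * M * ∑ j, |a i j| := by rw [← Finset.sum_mul]; ring
  rw [hu₁]
  have hrw : opexp A (-h) u₀ + h • ∑ i, b i • opexp A (-((1 - c i) * h)) (g (U i))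
      - opexp A (-h) u₀
      - h • ∑ i, b i • opexp A (-((1 - c i) * h)) (g (opexp A (-(c i * h)) u₀))
      = h • ∑ i, b i • opexp A (-((1 - c i) * h))
          (g (U i) - g (opexp A (-(c i * h)) u₀)) := by
    rw [add_sub_cancel_left, ← smul_sub, ← Finset.sum_sub_distrib]
    congr 1
    refine Finset.sum_congr rfl fun i _ => ?_
    rw [← smul_sub, ← map_sub]
  rw [hrw, norm_smul, Real.norm_of_nonneg hh.le]
  calc h * ‖∑ i, b i • opexp A (-((1 - c i) * h))
          (g (U i) - g (opexp A (-(c i * h)) u₀))‖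
      ≤ h * ∑ i, |b i| * (C_E * (L * (h * (C_E * M * ∑ j, |a i j|)))) := by
        refine mul_le_mul_of_nonneg_left
          ((norm_sum_le _ _).trans (Finset.sum_le_sum fun i _ => ?_)) hh.le
        rw [norm_smul, Real.norm_eq_abs]
        refine mul_le_mul_of_nonneg_left ((key _ _).trans ?_) (abs_nonneg _)
        exact mul_le_mul_of_nonneg_left
          ((hglip _ _).trans (mul_le_mul_of_nonneg_left (hstage i) hL)) hCE0
    _ = C_E ^ 2 * L * M * (∑ i, |b i| * ∑ j, |a i j|) * h ^ 2 := by
        rw [Finset.mul_sum, Finset.mul_sum, Finset.sum_mul]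
        exact Finset.sum_congr rfl fun i _ => by ring
end

section
/- For all constants C_E ≥ 1, M ≥ 0, s ∈ ℕ, and all Runge–Kutta coefficients b : Fin s → ℝ, c : Fin s → ℝ, a : Fin s → Fin s → ℝ with a i j = 0 whenever j ≥ i, there exists C ≥ 0 such that the following holds. Let E be a real Banach space, A : E →L[ℝ] E with ‖exp(-tA)‖ ≤ C_E for all t ∈ ℝ, let g : E → E be twice continuously (Fréchet) differentiable with ‖g(x)‖ ≤ M, ‖g'(x)‖ ≤ M, ‖g''(x)‖ ≤ M for all x ∈ E, let 0 < h ≤ 1 and u₀ ∈ E. Define the Lawson stages U_i = exp(-c_i hA)u₀ + h • ∑_{j<i} a_{ij} exp(-(c_i-c_j)hA)(g(U_j)) and the step u₁ = exp(-hA)u₀ + h • ∑_i b_i exp(-(1-c_i)hA)(g(U_i)). Writing g_{c_i} = g(exp(-c_i hA)u₀) and g'_{c_i} = g'(exp(-c_i hA)u₀), one has ‖u₁ - exp(-hA)u₀ - h • ∑_i b_i exp(-(1-c_i)hA) g_{c_i} - h² • ∑_i b_i exp(-(1-c_i)hA)( g'_{c_i}( ∑_{j<i} a_{ij} exp(-(c_i-c_j)hA)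 g_{c_j} ) )‖ ≤ C · h³. -/
section Aux
variable {E : Type*} [NormedAddCommGroup E] [NormedSpace ℝ E]

lemma lip_of_fderiv_le {g : E → E} (hg : ContDiff ℝ 2 g) {M : ℝ}
    (hb : ∀ x, ‖fderiv ℝ g x‖ ≤ M) (x y : E) : ‖g y - g x‖ ≤ M * ‖y - x‖ :=
  convex_univ.norm_image_sub_le_of_norm_fderiv_le
    (fun _ _ => (hg.differentiable (by norm_num)).differentiableAt)
    (fun z _ => hb z) trivial trivial

lemma fderiv_lip {g : E → E} (hg : ContDiff ℝ 2 g) {M : ℝ}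
    (hb : ∀ x, ‖iteratedFDeriv ℝ 2 g x‖ ≤ M) (x y : E) :
    ‖fderiv ℝ g y - fderiv ℝ g x‖ ≤ M * ‖y - x‖ := by
  set Φ := iteratedFDeriv ℝ 1 g with hΦ
  have hd : Differentiable ℝ Φ := hg.differentiable_iteratedFDeriv (by norm_num)
  have key : ‖Φ y - Φ x‖ ≤ M * ‖y - x‖ :=
    convex_univ.norm_image_sub_le_of_norm_fderiv_le
      (fun z _ => hd z)
      (fun z _ => by rw [hΦ, norm_fderiv_iteratedFDeriv]; exact hb z)
      trivial trivial
  have eq1 : ∀ z : E, fderiv ℝ g z =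
      (continuousMultilinearCurryFin1 ℝ E E) (Φ z) := by
    intro z
    ext v
    simp only [hΦ, iteratedFDeriv_one_apply, continuousMultilinearCurryFin1_apply]
    simp [Fin.snoc]
  rw [eq1 x, eq1 y, ← map_sub, LinearIsometryEquiv.norm_map]
  exact key

lemma taylor2 {g : E → E} (hg : ContDiff ℝ 2 g) {M : ℝ} (hM : 0 ≤ M)
    (hb : ∀ x, ‖iteratedFDeriv ℝ 2 g x‖ ≤ M) (x y : E) :
    ‖g y - g x - fderiv ℝ g x (y - x)‖ ≤ M * ‖y - x‖ ^ 2 := by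
  set L := fderiv ℝ g x with hL
  set φ : E → E := fun z => g z - L z with hφ
  have hgd : Differentiable ℝ g := hg.differentiable (by norm_num)
  have hdφ : ∀ z, fderiv ℝ φ z = fderiv ℝ g z - L := by
    intro z
    rw [hφ]
    rw [fderiv_fun_sub (hgd z) L.differentiableAt, L.fderiv]
  have key : ‖φ y - φ x‖ ≤ (M * ‖y - x‖) * ‖y - x‖ :=
    (convex_closedBall x ‖y - x‖).norm_image_sub_le_of_norm_fderiv_le
      (fun z _ => ((hgd z).sub L.differentiableAt))
      (fun z hz => by
        rw [hdφ z]
        calc ‖fderiv ℝ g z - L‖ ≤ M * ‖z - x‖ := fderiv_lip hg hb x z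
          _ ≤ M * ‖y - x‖ := by
              gcongr
              simpa [dist_eq_norm] using hz)
      (Metric.mem_closedBall_self (norm_nonneg _))
      (by simp [Metric.mem_closedBall, dist_eq_norm])
  have heq : φ y - φ x = g y - g x - L (y - x) := by
    simp [hφ, map_sub]
    abel
  rw [← heq]
  calc ‖φ y - φ x‖ ≤ (M * ‖y - x‖) * ‖y - x‖ := key
    _ = M * ‖y - x‖ ^ 2 := by ring

end Aux

attribute [irreducible] opexp

set_option maxHeartbeats 1600000 in
/-- Second-order expansion of one step of an `s`-stage Lawson method in terms of elementary
quadrature rules: `u₁` equals `exp(-hA)u₀` plus the elementary quadrature rules of the trees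
of orders one and two up to `O(h³)`, with a constant depending only on `C_E`, `M` and the
Runge–Kutta coefficients. -/
theorem stmt_6 (C_E M : ℝ) (hCE : 1 ≤ C_E) (hM : 0 ≤ M)
    (s : ℕ) (b c : Fin s → ℝ) (a : Fin s → Fin s → ℝ)
    (ha : ∀ i j : Fin s, j ≥ i → a i j = 0) :
    ∃ C : ℝ, 0 ≤ C ∧
      ∀ (E : Type) [NormedAddCommGroup E] [NormedSpace ℝ E] [CompleteSpace E]
        (A : E →L[ℝ] E),
        (∀ t : ℝ, ‖opexp A (-t)‖ ≤ C_E) →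
        ∀ g : E → E, ContDiff ℝ 2 g →
          (∀ x : E, ‖g x‖ ≤ M) →
          (∀ x : E, ‖fderiv ℝ g x‖ ≤ M) →
          (∀ x : E, ‖iteratedFDeriv ℝ 2 g x‖ ≤ M) →
        ∀ h : ℝ, 0 < h → h ≤ 1 →
        ∀ (u₀ : E) (U : Fin s → E) (u₁ : E),
          (∀ i : Fin s, U i = opexp A (-(c i * h)) u₀ +
            h • ∑ j ∈ Finset.univ.filter (fun j => j < i),
              a i j • opexp A (-((c i - c j) * h)) (g (U j))) →
          u₁ = opexp A (-h) u₀ +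
            h • ∑ i : Fin s, b i • opexp A (-((1 - c i) * h)) (g (U i)) →
          ‖u₁ - opexp A (-h) u₀ -
            h • ∑ i : Fin s,
              b i • opexp A (-((1 - c i) * h)) (g (opexp A (-(c i * h)) u₀)) -
            h ^ 2 • ∑ i : Fin s,
              b i • opexp A (-((1 - c i) * h))
                ((fderiv ℝ g (opexp A (-(c i * h)) u₀))
                  (∑ j ∈ Finset.univ.filter (fun j => j < i),
                    a i j • opexp A (-((c i - c j) * h))
                      (g (opexp A (-(c j * h)) u₀))))‖
            ≤ C * h ^ 3 := by
  have hCE0 : (0:ℝ) ≤ C_E := le_trans zero_le_one hCE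
  set Sa : ℝ := ∑ i : Fin s, ∑ j : Fin s, |a i j| with hSadef
  set Sb : ℝ := ∑ i : Fin s, |b i| with hSbdef
  have hSa0 : 0 ≤ Sa := Finset.sum_nonneg fun i _ => Finset.sum_nonneg fun j _ => abs_nonneg _
  have hSb0 : 0 ≤ Sb := Finset.sum_nonneg fun i _ => abs_nonneg _
  set K : ℝ := C_E * M * Sa with hKdef
  have hK0 : 0 ≤ K := by positivity
  set K₂ : ℝ := M * K ^ 2 + M * Sa * C_E * (M * K) with hK2def
  have hK20 : 0 ≤ K₂ := by positivity
  refine ⟨Sb * C_E * K₂, by positivity, ?_⟩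
  intro E _ _ _ A hE g hg hg0 hg1 hg2 h hh0 hh1 u₀ U u₁ hU hu1
  -- basic operator bound
  have hop : ∀ (t : ℝ) (x : E), ‖opexp A (-t) x‖ ≤ C_E * ‖x‖ := fun t x =>
    le_trans ((opexp A (-t)).le_opNorm x)
      (mul_le_mul_of_nonneg_right (hE t) (norm_nonneg x))
  -- abbreviations as plain functions (definitional)
  set V : Fin s → E := fun i => opexp A (-(c i * h)) u₀ with hVdef
  set D : Fin s → E := fun i => ∑ j ∈ Finset.univ.filter (fun j => j < i),
    a i j • opexp A (-((c i - c j) * h)) (g (U j)) with hDdef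
  set w : Fin s → E := fun i => ∑ j ∈ Finset.univ.filter (fun j => j < i),
    a i j • opexp A (-((c i - c j) * h)) (g (V j)) with hwdef
  have hU' : ∀ i, U i = V i + h • D i := hU
  have habs : ∀ i : Fin s, ∑ j ∈ Finset.univ.filter (fun j => j < i), |a i j| ≤ Sa := by
    intro i
    calc ∑ j ∈ Finset.univ.filter (fun j => j < i), |a i j|
        ≤ ∑ j : Fin s, |a i j| :=
          Finset.sum_le_sum_of_subset_of_nonneg (Finset.filter_subset _ _)
            (fun j _ _ => abs_nonneg _)
      _ ≤ Sa := Finset.single_le_sum (f := fun i => ∑ j : Fin s, |a i j|)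
            (fun i _ => Finset.sum_nonneg fun j _ => abs_nonneg _) (Finset.mem_univ i)
  have hD : ∀ i, ‖D i‖ ≤ K := by
    intro i
    rw [hDdef]
    calc ‖∑ j ∈ Finset.univ.filter (fun j => j < i),
            a i j • opexp A (-((c i - c j) * h)) (g (U j))‖
        ≤ ∑ j ∈ Finset.univ.filter (fun j => j < i),
            ‖a i j • opexp A (-((c i - c j) * h)) (g (U j))‖ := norm_sum_le _ _
      _ ≤ ∑ j ∈ Finset.univ.filter (fun j => j < i), |a i j| * (C_E * M) := by
          refine Finset.sum_le_sum fun j _ => ?_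
          rw [norm_smul, Real.norm_eq_abs]
          exact mul_le_mul_of_nonneg_left
            (le_trans (hop _ _) (mul_le_mul_of_nonneg_left (hg0 _) hCE0)) (abs_nonneg _)
      _ = (∑ j ∈ Finset.univ.filter (fun j => j < i), |a i j|) * (C_E * M) :=
          (Finset.sum_mul _ _ _).symm
      _ ≤ Sa * (C_E * M) := mul_le_mul_of_nonneg_right (habs i) (by positivity)
      _ = K := by rw [hKdef]; ring
  have hUV : ∀ i, ‖U i - V i‖ ≤ h * K := by
    intro i
    rw [hU' i, add_sub_cancel_left, norm_smul, Real.norm_eq_abs, abs_of_pos hh0]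
    exact mul_le_mul_of_nonneg_left (hD i) (le_of_lt hh0)
  have hDw : ∀ i, ‖D i - w i‖ ≤ Sa * C_E * (M * (h * K)) := by
    intro i
    have heq : D i - w i = ∑ j ∈ Finset.univ.filter (fun j => j < i),
        a i j • opexp A (-((c i - c j) * h)) (g (U j) - g (V j)) := by
      rw [hDdef, hwdef]
      simp only [map_sub, smul_sub, Finset.sum_sub_distrib]
    rw [heq]
    calc ‖∑ j ∈ Finset.univ.filter (fun j => j < i),
            a i j • opexp A (-((c i - c j) * h)) (g (U j) - g (V j))‖
        ≤ ∑ j ∈ Finset.univ.filter (fun j => j < i),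
            ‖a i j • opexp A (-((c i - c j) * h)) (g (U j) - g (V j))‖ := norm_sum_le _ _
      _ ≤ ∑ j ∈ Finset.univ.filter (fun j => j < i), |a i j| * (C_E * (M * (h * K))) := by
          refine Finset.sum_le_sum fun j _ => ?_
          rw [norm_smul, Real.norm_eq_abs]
          refine mul_le_mul_of_nonneg_left ?_ (abs_nonneg _)
          refine le_trans (hop _ _) (mul_le_mul_of_nonneg_left ?_ hCE0)
          exact le_trans (lip_of_fderiv_le hg hg1 _ _)
            (mul_le_mul_of_nonneg_left (hUV j) hM)
      _ = (∑ j ∈ Finset.univ.filter (fun j => j < i), |a i j|) * (C_E * (M * (h * K))) :=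
          (Finset.sum_mul _ _ _).symm
      _ ≤ Sa * (C_E * (M * (h * K))) := by
          refine mul_le_mul_of_nonneg_right (habs i) (by positivity)
      _ = Sa * C_E * (M * (h * K)) := by ring
  -- bound on the per-stage defect
  have hT : ∀ i, ‖g (U i) - g (V i) - h • (fderiv ℝ g (V i)) (w i)‖ ≤ h ^ 2 * K₂ := by
    intro i
    have hsplit : g (U i) - g (V i) - h • (fderiv ℝ g (V i)) (w i)
        = (g (U i) - g (V i) - (fderiv ℝ g (V i)) (U i - V i))
          + (fderiv ℝ g (V i)) (h • (D i - w i)) := by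
      have hUVi : U i - V i = h • D i := by rw [hU' i]; abel
      rw [hUVi]
      simp only [map_sub, map_smul, smul_sub]
      abel
    rw [hsplit]
    have t1 : ‖g (U i) - g (V i) - (fderiv ℝ g (V i)) (U i - V i)‖ ≤ M * (h * K) ^ 2 := by
      refine le_trans (taylor2 hg hM hg2 (V i) (U i)) ?_
      have := hUV i
      gcongr
    have t2 : ‖(fderiv ℝ g (V i)) (h • (D i - w i))‖ ≤ M * (h * (Sa * C_E * (M * (h * K)))) := by
      refine le_trans ((fderiv ℝ g (V i)).le_opNorm _) ?_
      refine mul_le_mul (hg1 _) ?_ (norm_nonneg _) hM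
      rw [norm_smul, Real.norm_eq_abs, abs_of_pos hh0]
      exact mul_le_mul_of_nonneg_left (hDw i) (le_of_lt hh0)
    calc ‖_ + _‖ ≤ ‖g (U i) - g (V i) - (fderiv ℝ g (V i)) (U i - V i)‖
          + ‖(fderiv ℝ g (V i)) (h • (D i - w i))‖ := norm_add_le _ _
      _ ≤ M * (h * K) ^ 2 + M * (h * (Sa * C_E * (M * (h * K)))) := add_le_add t1 t2
      _ = h ^ 2 * K₂ := by rw [hK2def]; ring
  -- the algebraic identity
  have key : u₁ - opexp A (-h) u₀ -
      h • ∑ i : Fin s, b i • opexp A (-((1 - c i) * h)) (g (V i)) -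
      h ^ 2 • ∑ i : Fin s, b i • opexp A (-((1 - c i) * h)) ((fderiv ℝ g (V i)) (w i))
    = h • ∑ i : Fin s, b i • opexp A (-((1 - c i) * h))
        (g (U i) - g (V i) - h • (fderiv ℝ g (V i)) (w i)) := by
    rw [hu1, add_sub_cancel_left]
    simp only [map_sub, map_smul, smul_sub, Finset.sum_sub_distrib, Finset.smul_sum,
      smul_smul, pow_two, mul_comm, mul_assoc, mul_left_comm]
  -- final estimate
  show ‖u₁ - opexp A (-h) u₀ -
      h • ∑ i : Fin s, b i • opexp A (-((1 - c i) * h)) (g (V i)) -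
      h ^ 2 • ∑ i : Fin s, b i • opexp A (-((1 - c i) * h)) ((fderiv ℝ g (V i)) (w i))‖
    ≤ Sb * C_E * K₂ * h ^ 3
  rw [key, norm_smul, Real.norm_eq_abs, abs_of_pos hh0]
  calc h * ‖∑ i : Fin s, b i • opexp A (-((1 - c i) * h))
          (g (U i) - g (V i) - h • (fderiv ℝ g (V i)) (w i))‖
      ≤ h * ∑ i : Fin s, |b i| * (C_E * (h ^ 2 * K₂)) := by
        refine mul_le_mul_of_nonneg_left ?_ (le_of_lt hh0)
        refine le_trans (norm_sum_le _ _) (Finset.sum_le_sum fun i _ => ?_)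
        rw [norm_smul, Real.norm_eq_abs]
        refine mul_le_mul_of_nonneg_left ?_ (abs_nonneg _)
        exact le_trans (hop _ _) (mul_le_mul_of_nonneg_left (hT i) hCE0)
    _ = h * (Sb * (C_E * (h ^ 2 * K₂))) := by rw [← Finset.sum_mul, hSbdef]
    _ = Sb * C_E * K₂ * h ^ 3 := by ring
end

section
/- Let E be a real Banach space, A : E →L[ℝ] E continuous linear, m ≥ 1 a natural number, and let g : E → E be m-times continuously (Fréchet) differentiable (C^m). For f : E → E differentiable define ad_A f : E → E by (ad_A f)(x) = A(f(x)) - (Df)(x)(A x), and let ad_A^[m] g denote the m-fold iterate of ad_A applied to g. Fix h ∈ ℝ, ζ ∈ ℝ, w ∈ E. Then the function Ψ(σ) = exp(-(ζ-σ)hA)( g(exp(-σhA) w) ) is m-times differentiable on ℝ and its m-th derivative satisfies Ψ^{(m)}(σ) = h^m • exp(-(ζ-σ)hA)( (ad_A^[m] g)(exp(-σhA) w) ) for all σ ∈ ℝ. -/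
set_option maxHeartbeats 1000000
set_option synthInstance.maxHeartbeats 400000
set_option linter.unusedSectionVars false


/-- The Lie commutator `ad_A f = [F_A, f]` of a vector field `f` with the linear vector
field `F_A(x) = Ax`: `(ad_A f)(x) = A(f(x)) - (Df)(x)(Ax)`. -/
noncomputable def adA {E : Type*} [NormedAddCommGroup E] [NormedSpace ℝ E]
    (A : E →L[ℝ] E) (f : E → E) : E → E :=
  fun x => A (f x) - (fderiv ℝ f x) (A x)

section aux
variable {E : Type*} [NormedAddCommGroup E] [NormedSpace ℝ E] [CompleteSpace E]

lemma adA_contDiff {n : ℕ} (A : E →L[ℝ] E) {g : E → E} (hg : ContDiff ℝ ((n : ℕ∞) + 1) g) :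
    ContDiff ℝ (n : ℕ∞) (adA A g) := by
  unfold adA
  have h1 : ContDiff ℝ (n : ℕ∞) (fun x => A (g x)) :=
    A.contDiff.comp (hg.of_le le_self_add)
  have h2 : ContDiff ℝ (n : ℕ∞) (fderiv ℝ g) := hg.fderiv_right le_rfl
  exact h1.sub (h2.clm_apply A.contDiff)

lemma adA_iter_contDiff (A : E →L[ℝ] E) {n k : ℕ} {g : E → E}
    (hg : ContDiff ℝ ((n + k : ℕ) : ℕ∞) g) :
    ContDiff ℝ (n : ℕ∞) ((adA A)^[k] g) := by
  induction k generalizing n with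
  | zero => simpa using hg
  | succ k ih =>
      rw [Function.iterate_succ_apply']
      have h1 : ContDiff ℝ (((n + 1 : ℕ) : ℕ∞)) ((adA A)^[k] g) := by
        apply ih
        rw [show (n + 1) + k = n + (k + 1) from by omega]
        exact hg
      apply adA_contDiff
      exact_mod_cast h1

lemma opexp_comm (A : E →L[ℝ] E) (t : ℝ) (v : E) : opexp A t (A v) = A (opexp A t v) := by
  have hc : Commute ((t • A : E →L[ℝ] E)) A := (Commute.refl A).smul_left t
  have hce := hc.exp_left
  unfold opexp
  calc NormedSpace.exp (t • A) (A v) = (NormedSpace.exp (t • A) * A) v := rfl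
    _ = (A * NormedSpace.exp (t • A)) v := by rw [hce]
    _ = A (NormedSpace.exp (t • A) v) := rfl

lemma Phi_hasDerivAt (A : E →L[ℝ] E) (h ζ : ℝ) (w : E) {g : E → E}
    (hg : Differentiable ℝ g) (σ : ℝ) :
    HasDerivAt (fun σ : ℝ => opexp A (-((ζ - σ) * h)) (g (opexp A (-(σ * h)) w)))
      (h • opexp A (-((ζ - σ) * h)) ((adA A g) (opexp A (-(σ * h)) w))) σ := by
  have hs : HasDerivAt (fun σ : ℝ => -((ζ - σ) * h)) h σ := by
    simpa using (((hasDerivAt_const σ ζ).sub (hasDerivAt_id σ)).mul_const h).fun_neg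
  have hB : HasDerivAt (fun σ : ℝ => opexp A (-((ζ - σ) * h)))
      (h • (opexp A (-((ζ - σ) * h)) * A)) σ := by
    unfold opexp
    exact (hasDerivAt_exp_smul_const (𝕂 := ℝ) A (-((ζ - σ) * h))).scomp σ hs
  have ht : HasDerivAt (fun σ : ℝ => -(σ * h)) (-h) σ := by
    simpa using ((hasDerivAt_id σ).mul_const h).fun_neg
  have hCm : HasDerivAt (fun σ : ℝ => opexp A (-(σ * h)))
      ((-h) • (opexp A (-(σ * h)) * A)) σ := by
    unfold opexp
    exact (hasDerivAt_exp_smul_const (𝕂 := ℝ) A (-(σ * h))).scomp σ ht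
  have hc : HasDerivAt (fun σ : ℝ => opexp A (-(σ * h)) w)
      ((-h) • opexp A (-(σ * h)) (A w)) σ := by
    have := hCm.clm_apply (hasDerivAt_const σ w)
    simpa using this
  set c : E := opexp A (-(σ * h)) w with hcdef
  have hcw : opexp A (-(σ * h)) (A w) = A c := opexp_comm A _ w
  rw [hcw] at hc
  have hu : HasDerivAt (fun σ : ℝ => g (opexp A (-(σ * h)) w))
      (fderiv ℝ g c ((-h) • A c)) σ :=
    ((hg c).hasFDerivAt).comp_hasDerivAt σ hc
  have hfinal := hB.clm_apply hu
  convert hfinal using 1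
  rw [← hcdef]
  simp only [adA, map_sub, smul_sub, ContinuousLinearMap.smul_apply,
    ContinuousLinearMap.mul_apply, map_smul, map_neg, neg_smul, smul_neg]
  abel

lemma Phi_iteratedDeriv (A : E →L[ℝ] E) (h ζ : ℝ) (w : E) (k : ℕ) :
    ∀ g : E → E, ContDiff ℝ (k : ℕ∞) g →
      iteratedDeriv k (fun σ : ℝ => opexp A (-((ζ - σ) * h)) (g (opexp A (-(σ * h)) w))) =
        fun σ : ℝ => h ^ k • opexp A (-((ζ - σ) * h)) (((adA A)^[k] g) (opexp A (-(σ * h)) w)) := by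
  induction k with
  | zero => intro g hg; funext σ; simp [iteratedDeriv_zero]
  | succ k ih =>
      intro g hg
      rw [iteratedDeriv_succ, ih g (hg.of_le (by exact_mod_cast Nat.le_succ k))]
      funext σ
      have hdiff : Differentiable ℝ ((adA A)^[k] g) := by
        have h1 : ContDiff ℝ (((1 : ℕ) + k : ℕ) : ℕ∞) g := by
          rw [show (1 : ℕ) + k = k + 1 from by omega]
          exact_mod_cast hg
        have h2 : ContDiff ℝ ((1 : ℕ) : ℕ∞) ((adA A)^[k] g) := adA_iter_contDiff A h1
        exact h2.differentiable (by simp)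
      have hD := (Phi_hasDerivAt A h ζ w hdiff σ).fun_const_smul (h ^ k)
      rw [hD.deriv, Function.iterate_succ_apply', smul_smul, ← pow_succ]

end aux

/-- Lemma 5.3(a): for `g ∈ Cᵐ`, the function `Ψ(σ) = exp(-(ζ-σ)hA) g(exp(-σhA)w)` is
`m`-times differentiable with `Ψ⁽ᵐ⁾(σ) = hᵐ • exp(-(ζ-σ)hA) ([F_A,g]_m)(exp(-σhA)w)`,
where `[F_A,g]_m` is the `m`-fold iterated Lie commutator. -/
theorem stmt_9 {E : Type*} [NormedAddCommGroup E] [NormedSpace ℝ E] [CompleteSpace E]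
    (A : E →L[ℝ] E) (m : ℕ) (hm : 1 ≤ m) (g : E → E) (hg : ContDiff ℝ m g)
    (h ζ : ℝ) (w : E) :
    (∀ k : ℕ, k < m →
      Differentiable ℝ (iteratedDeriv k
        (fun σ : ℝ => opexp A (-((ζ - σ) * h)) (g (opexp A (-(σ * h)) w))))) ∧
    ∀ σ : ℝ,
      iteratedDeriv m (fun σ : ℝ => opexp A (-((ζ - σ) * h)) (g (opexp A (-(σ * h)) w))) σ =
        h ^ m • opexp A (-((ζ - σ) * h)) (((adA A)^[m] g) (opexp A (-(σ * h)) w)) := by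
  constructor
  · intro k hk
    rw [Phi_iteratedDeriv A h ζ w k g (hg.of_le (by exact_mod_cast hk.le))]
    have hdiff : Differentiable ℝ ((adA A)^[k] g) := by
      have h1 : ContDiff ℝ (((1 : ℕ) + k : ℕ) : ℕ∞) g :=
        hg.of_le (by exact_mod_cast (by omega : 1 + k ≤ m))
      have h2 : ContDiff ℝ ((1 : ℕ) : ℕ∞) ((adA A)^[k] g) := adA_iter_contDiff A h1
      exact h2.differentiable (by simp)
    exact fun σ => ((Phi_hasDerivAt A h ζ w hdiff σ).const_smul (h ^ k)).differentiableAt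
  · intro σ
    rw [Phi_iteratedDeriv A h ζ w m g hg]
end

section
/- Let E be a real Banach space, A : E →L[ℝ] E continuous linear, k ∈ ℕ, and let g : E → E be (k+1)-times continuously (Fréchet) differentiable. Then for all w ∈ E and all v : Fin k → E, the k-th iterated Fréchet derivative of the map x ↦ (Dg)(x)(A x) satisfies D^k( x ↦ (Dg)(x)(Ax) )(w)(v₁,…,v_k) = D^{k+1}g(w)(A w, v₁,…,v_k) + ∑_{j=1}^{k} D^k g(w)(v₁,…,v_{j-1}, A v_j, v_{j+1},…,v_k), where D^k g(w) denotes the k-th iterated (symmetric multilinear) Fréchet derivative of g at w. -/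
open Fin Function

section Aux
variable {E : Type*} [NormedAddCommGroup E] [NormedSpace ℝ E]

lemma swap_first_two (k : ℕ) (g : E → E) (hg : ContDiff ℝ (k + 2 : ℕ) g) (w a b : E)
    (m : Fin k → E) :
    iteratedFDeriv ℝ (k + 2) g w (Fin.cons a (Fin.cons b m)) =
      iteratedFDeriv ℝ (k + 2) g w (Fin.cons b (Fin.cons a m)) := by
  have hg2 : ContDiff ℝ 2 (iteratedFDeriv ℝ k g) :=
    hg.iteratedFDeriv_right (by norm_cast; omega)
  have hsym : IsSymmSndFDerivAt ℝ (iteratedFDeriv ℝ k g) w :=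
    hg2.contDiffAt.isSymmSndFDerivAt (by simp)
  have hN : Differentiable ℝ (iteratedFDeriv ℝ (k + 1) g) :=
    (hg.iteratedFDeriv_right (by norm_cast; omega)).differentiable one_ne_zero
  have hM : Differentiable ℝ (fderiv ℝ (iteratedFDeriv ℝ k g)) :=
    (hg2.fderiv_right (by norm_num)).differentiable one_ne_zero
  have H : ∀ a b : E, iteratedFDeriv ℝ (k + 2) g w (Fin.cons a (Fin.cons b m)) =
      fderiv ℝ (fderiv ℝ (iteratedFDeriv ℝ k g)) w a b m := by
    intro a b
    have e1 : iteratedFDeriv ℝ (k + 2) g w (Fin.cons a (Fin.cons b m)) =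
        fderiv ℝ (iteratedFDeriv ℝ (k + 1) g) w a (Fin.cons b m) := by
      rw [iteratedFDeriv_succ_apply_left]; simp
    rw [e1, ← fderiv_continuousMultilinear_apply_const_apply (hN w) (Fin.cons b m) a]
    set Ψ : (E →L[ℝ] ContinuousMultilinearMap ℝ (fun _ : Fin k => E) E) →L[ℝ] E :=
      (ContinuousMultilinearMap.apply ℝ (fun _ : Fin k => E) E m).comp
        (ContinuousLinearMap.apply ℝ (ContinuousMultilinearMap ℝ (fun _ : Fin k => E) E) b)
      with hΨ
    have e2 : (fun x => iteratedFDeriv ℝ (k + 1) g x (Fin.cons b m)) =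
        (⇑Ψ ∘ fderiv ℝ (iteratedFDeriv ℝ k g)) := by
      funext x
      rw [iteratedFDeriv_succ_apply_left]
      simp [hΨ]
    rw [e2, (Ψ.hasFDerivAt.comp w (hM w).hasFDerivAt).fderiv]
    simp [hΨ]
  rw [H, H, hsym a b]

end Aux

/-- Equation (5.9): Leibniz-type identity for the `k`-th iterated Fréchet derivative of
`x ↦ (Dg)(x)(Ax)`:
`D^k(x ↦ g'(x)Ax)(w)(v₁,…,v_k) = g⁽ᵏ⁺¹⁾(w)(Aw,v₁,…,v_k) + ∑ⱼ g⁽ᵏ⁾(w)(v₁,…,Avⱼ,…,v_k)`. -/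
theorem stmt_11 {E : Type*} [NormedAddCommGroup E] [NormedSpace ℝ E] [CompleteSpace E]
    (A : E →L[ℝ] E) (k : ℕ) (g : E → E) (hg : ContDiff ℝ (k + 1 : ℕ) g)
    (w : E) (v : Fin k → E) :
    iteratedFDeriv ℝ k (fun x => (fderiv ℝ g x) (A x)) w v =
      iteratedFDeriv ℝ (k + 1) g w (Fin.cons (A w) v) +
        ∑ j : Fin k, iteratedFDeriv ℝ k g w (Function.update v j (A (v j))) := by
  induction k generalizing g w with
  | zero =>
    simp [iteratedFDeriv_zero_apply, iteratedFDeriv_one_apply]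
  | succ k IH =>
    -- notation
    set u : Fin k → E := Fin.tail v with hu
    have hv : v = Fin.cons (v 0) u := (Fin.cons_self_tail v).symm
    -- regularity
    have hN : Differentiable ℝ (iteratedFDeriv ℝ (k + 1) g) :=
      (hg.iteratedFDeriv_right (m := 1) (by norm_cast; omega)).differentiable one_ne_zero
    have hM : Differentiable ℝ (iteratedFDeriv ℝ k g) :=
      (hg.iteratedFDeriv_right (m := 1) (by norm_cast; omega)).differentiable one_ne_zero
    have hf : ContDiff ℝ (k + 1 : ℕ) (fun x => (fderiv ℝ g x) (A x)) :=
      (hg.fderiv_right (by norm_cast)).clm_apply A.contDiff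
    have hDkf : Differentiable ℝ (iteratedFDeriv ℝ k (fun x => (fderiv ℝ g x) (A x))) :=
      (hf.iteratedFDeriv_right (m := 1) (by norm_cast; omega)).differentiable one_ne_zero
    -- LHS as derivative of applied function
    rw [iteratedFDeriv_succ_apply_left,
      ← fderiv_continuousMultilinear_apply_const_apply (hDkf w) (Fin.tail v) (v 0)]
    have hfun : (fun x => iteratedFDeriv ℝ k (fun x => (fderiv ℝ g x) (A x)) x (Fin.tail v)) =
        (fun x => iteratedFDeriv ℝ (k + 1) g x (Fin.cons (A x) u) +
          ∑ j : Fin k, iteratedFDeriv ℝ k g x (Function.update u j (A (u j)))) := by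
      funext x
      exact IH g (hg.of_le (by norm_cast; omega)) x u
    rw [hfun]
    -- the curried apply machinery
    set Mk := ContinuousMultilinearMap ℝ (fun _ : Fin k => E) E with hMk
    set e := continuousMultilinearCurryLeftEquiv ℝ (fun _ : Fin (k + 1) => E) E with he
    set ap : Mk →L[ℝ] E := ContinuousMultilinearMap.apply ℝ (fun _ : Fin k => E) E u with hap
    set Φ : ContinuousMultilinearMap ℝ (fun _ : Fin (k + 1) => E) E →L[ℝ] E →L[ℝ] E :=
      (ContinuousLinearMap.compL ℝ E Mk E ap).comp
        (e.toContinuousLinearEquiv : ContinuousMultilinearMap ℝ (fun _ : Fin (k + 1) => E) E →L[ℝ]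
          (E →L[ℝ] Mk)) with hΦ
    have hc : HasFDerivAt (fun x => Φ (iteratedFDeriv ℝ (k + 1) g x))
        (Φ.comp (fderiv ℝ (iteratedFDeriv ℝ (k + 1) g) w)) w :=
      Φ.hasFDerivAt.comp w (hN w).hasFDerivAt
    have h1 : HasFDerivAt (fun x => iteratedFDeriv ℝ (k + 1) g x (Fin.cons (A x) u))
        ((Φ (iteratedFDeriv ℝ (k + 1) g w)).comp A +
          (Φ.comp (fderiv ℝ (iteratedFDeriv ℝ (k + 1) g) w)).flip (A w)) w :=
      hc.clm_apply A.hasFDerivAt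
    have h2 : HasFDerivAt
        (fun x => ∑ j : Fin k, iteratedFDeriv ℝ k g x (Function.update u j (A (u j))))
        (∑ j : Fin k, (ContinuousMultilinearMap.apply ℝ (fun _ : Fin k => E) E
            (Function.update u j (A (u j)))).comp (fderiv ℝ (iteratedFDeriv ℝ k g) w)) w :=
      HasFDerivAt.fun_sum fun j _ =>
        ((ContinuousMultilinearMap.apply ℝ (fun _ : Fin k => E) E
          (Function.update u j (A (u j)))).hasFDerivAt.comp w (hM w).hasFDerivAt)
    rw [(h1.fun_add h2).fderiv]
    -- compute the applications
    simp only [ContinuousLinearMap.add_apply, ContinuousLinearMap.coe_comp', comp_apply,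
      ContinuousLinearMap.flip_apply, ContinuousLinearMap.coe_sum', Finset.sum_apply]
    have eΦ : ∀ (M : ContinuousMultilinearMap ℝ (fun _ : Fin (k + 1) => E) E) (z : E),
        Φ M z = M (Fin.cons z u) := fun M z => rfl
    have ht1 : Φ (iteratedFDeriv ℝ (k + 1) g w) (A (v 0)) =
        iteratedFDeriv ℝ (k + 1) g w (Function.update v 0 (A (v 0))) := by
      rw [eΦ]
      conv_rhs => rw [hv, Fin.update_cons_zero]
      simp
    have ht2 : Φ ((fderiv ℝ (iteratedFDeriv ℝ (k + 1) g) w) (v 0)) (A w) =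
        iteratedFDeriv ℝ (k + 1 + 1) g w (Fin.cons (A w) v) := by
      rw [eΦ]
      have e3 : fderiv ℝ (iteratedFDeriv ℝ (k + 1) g) w (v 0) (Fin.cons (A w) u) =
          iteratedFDeriv ℝ (k + 2) g w (Fin.cons (v 0) (Fin.cons (A w) u)) := by
        rw [iteratedFDeriv_succ_apply_left]; simp
      rw [e3, swap_first_two k g hg w (v 0) (A w) u]
      conv_rhs => rw [hv]
    have ht3 : ∀ j : Fin k, ContinuousMultilinearMap.apply ℝ (fun _ : Fin k => E) E
        (Function.update u j (A (u j))) ((fderiv ℝ (iteratedFDeriv ℝ k g) w) (v 0)) =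
        iteratedFDeriv ℝ (k + 1) g w (Function.update v j.succ (A (v j.succ))) := by
      intro j
      have e4 : Function.update v j.succ (A (v j.succ)) =
          Fin.cons (v 0) (Function.update u j (A (u j))) := by
        conv_lhs => rw [hv]
        rw [Fin.cons_update]
        rfl
      rw [e4, iteratedFDeriv_succ_apply_left]
      simp
    simp only [ht1, ht2, ht3]
    rw [Fin.sum_univ_succ]
    abel
end

section
/- Let E be a real Banach space, A : E →L[ℝ] E continuous linear, and C_E ≥ 1 with ‖exp(-tA)‖ ≤ C_E for all t ≥ 0. Let g : E → E be Lipschitz continuous with constant L, and h ≥ 0. Define N(v) = ⨆_{t ≥ 0} ‖exp(-tA)v‖ and the Lawson–Euler step Φ(v) = exp(-hA)(v + h • g(v)). Then for all u, v ∈ E: N(Φ(u) - Φ(v)) ≤ (1 + h·C_E·L) · N(u - v). -/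
set_option synthInstance.maxHeartbeats 1000000


lemma opexp_zero {E : Type*} [NormedAddCommGroup E] [NormedSpace ℝ E]
    [CompleteSpace E] (A : E →L[ℝ] E) : opexp A 0 = 1 := by
  simp [opexp, NormedSpace.exp_zero]

lemma opexp_add {E : Type*} [NormedAddCommGroup E] [NormedSpace ℝ E]
    [CompleteSpace E] (A : E →L[ℝ] E) (s t : ℝ) :
    opexp A (s + t) = opexp A s * opexp A t := by
  rw [opexp, opexp, opexp, add_smul]
  letI : NormedAlgebra ℚ (E →L[ℝ] E) := .restrictScalars ℚ ℝ (E →L[ℝ] E)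
  refine NormedSpace.exp_add_of_commute ?_
  show _ = _
  rw [smul_mul_smul_comm, smul_mul_smul_comm, mul_comm s t]

/-- Stability estimate (proof of Theorem 4.6): in the equivalent norm
`N(v) = ⨆_{t≥0} ‖exp(-tA)v‖`, the Lawson–Euler step `Φ(v) = exp(-hA)(v + h g(v))`
satisfies `N(Φ(u) - Φ(v)) ≤ (1 + h C_E L) N(u - v)`. -/
theorem stmt_14 {E : Type*} [NormedAddCommGroup E] [NormedSpace ℝ E] [CompleteSpace E]
    (A : E →L[ℝ] E) (C_E : ℝ) (hCE : 1 ≤ C_E)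
    (hA : ∀ t : ℝ, 0 ≤ t → ‖opexp A (-t)‖ ≤ C_E)
    (g : E → E) (L : ℝ) (hL : 0 ≤ L) (hg : LipschitzWith (Real.toNNReal L) g)
    (h : ℝ) (hh : 0 ≤ h) (u v : E) :
    (⨆ t : Set.Ici (0 : ℝ), ‖opexp A (-(t : ℝ))
        (opexp A (-h) (u + h • g u) - opexp A (-h) (v + h • g v))‖) ≤
      (1 + h * C_E * L) * ⨆ t : Set.Ici (0 : ℝ), ‖opexp A (-(t : ℝ)) (u - v)‖ := by
  set N : E → ℝ := fun w => ⨆ t : Set.Ici (0 : ℝ), ‖opexp A (-(t : ℝ)) w‖ with hN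
  have hbdd : ∀ w : E, BddAbove (Set.range fun t : Set.Ici (0 : ℝ) =>
      ‖opexp A (-(t : ℝ)) w‖) := by
    intro w
    refine ⟨C_E * ‖w‖, ?_⟩
    rintro x ⟨t, rfl⟩
    calc ‖opexp A (-(t : ℝ)) w‖ ≤ ‖opexp A (-(t : ℝ))‖ * ‖w‖ :=
          (opexp A (-(t : ℝ))).le_opNorm w
      _ ≤ C_E * ‖w‖ := by
          have := hA t t.2
          exact mul_le_mul_of_nonneg_right this (norm_nonneg w)
  have hN_le : ∀ w : E, N w ≤ C_E * ‖w‖ := by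
    intro w
    refine ciSup_le fun t => ?_
    calc ‖opexp A (-(t : ℝ)) w‖ ≤ ‖opexp A (-(t : ℝ))‖ * ‖w‖ :=
          (opexp A (-(t : ℝ))).le_opNorm w
      _ ≤ C_E * ‖w‖ := mul_le_mul_of_nonneg_right (hA t t.2) (norm_nonneg w)
  have h_le_N : ∀ w : E, ‖w‖ ≤ N w := by
    intro w
    have := le_ciSup (hbdd w) (⟨0, Set.self_mem_Ici⟩ : Set.Ici (0 : ℝ))
    simpa [opexp_zero] using this
  have hN_nonneg : ∀ w : E, 0 ≤ N w := fun w => le_trans (norm_nonneg w) (h_le_N w)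
  -- semigroup property: N (opexp A (-h) w) ≤ N w
  have hN_shift : ∀ w : E, N (opexp A (-h) w) ≤ N w := by
    intro w
    refine ciSup_le fun t => ?_
    have key : opexp A (-(t : ℝ)) (opexp A (-h) w) = opexp A (-((t : ℝ) + h)) w := by
      rw [neg_add, opexp_add]
      rfl
    rw [key]
    have : ((⟨(t : ℝ) + h, add_nonneg t.2 hh⟩ : Set.Ici (0 : ℝ)) : ℝ) = (t : ℝ) + h := rfl
    calc ‖opexp A (-((t : ℝ) + h)) w‖
        = ‖opexp A (-(((⟨(t : ℝ) + h, add_nonneg t.2 hh⟩ : Set.Ici (0:ℝ)) : ℝ))) w‖ := by rw [this]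
      _ ≤ N w := le_ciSup (hbdd w) _
  -- subadditivity
  have hN_add : ∀ w₁ w₂ : E, N (w₁ + w₂) ≤ N w₁ + N w₂ := by
    intro w₁ w₂
    refine ciSup_le fun t => ?_
    calc ‖opexp A (-(t : ℝ)) (w₁ + w₂)‖
        ≤ ‖opexp A (-(t : ℝ)) w₁‖ + ‖opexp A (-(t : ℝ)) w₂‖ := by
          rw [map_add]; exact norm_add_le _ _
      _ ≤ N w₁ + N w₂ := add_le_add (le_ciSup (hbdd w₁) t) (le_ciSup (hbdd w₂) t)
  -- rewrite the inner difference
  have hdiff : opexp A (-h) (u + h • g u) - opexp A (-h) (v + h • g v)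
      = opexp A (-h) ((u - v) + h • (g u - g v)) := by
    rw [← map_sub]
    congr 1
    rw [smul_sub]
    abel
  rw [hdiff]
  calc N (opexp A (-h) ((u - v) + h • (g u - g v)))
      ≤ N ((u - v) + h • (g u - g v)) := hN_shift _
    _ ≤ N (u - v) + N (h • (g u - g v)) := hN_add _ _
    _ ≤ N (u - v) + C_E * ‖h • (g u - g v)‖ := by
        exact add_le_add_right (hN_le _) _
    _ ≤ N (u - v) + C_E * (h * (L * ‖u - v‖)) := by
        gcongr
        rw [norm_smul, Real.norm_of_nonneg hh]
        gcongr
        have := hg.dist_le_mul u v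
        rw [Real.coe_toNNReal L hL] at this
        simpa [dist_eq_norm] using this
    _ ≤ N (u - v) + C_E * (h * (L * N (u - v))) := by
        gcongr
        exact h_le_N _
    _ = (1 + h * C_E * L) * N (u - v) := by ring
end

section
/- Let d ∈ ℕ, β ∈ ℝ, and let u : EuclideanSpace ℝ (Fin d) → ℂ be twice continuously differentiable. Write ∂ⱼu(x) = fderiv ℝ u x (e_j) for the partial derivative in the j-th standard basis direction, Δu(x) = ∑_j fderiv ℝ (fun y => fderiv ℝ u y (e_j)) x (e_j) for the Laplacian, and define g(v) = i·β·v²·conj(v) for v ∈ ℂ. Then for every x: -i·Δ(fun y => g(u y))(x) + i·β·( (u x)²·conj(i·Δu(x)) + 2·(u x)·conj(u x)·(i·Δu(x)) ) = 2·β·( conj(u x)·∑_j (∂ⱼu(x))² + 2·(u x)·∑_j ∂ⱼu(x)·conj(∂ⱼu(x)) + (u x)²·conj(Δu(x)) ). -/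
/-- The `j`-th partial derivative `∂ⱼu(x) = fderiv ℝ u x (e_j)` of a function on
`EuclideanSpace ℝ (Fin d)`, where `e_j` is the `j`-th standard basis vector. -/
noncomputable def pd {d : ℕ} (u : EuclideanSpace ℝ (Fin d) → ℂ) (j : Fin d)
    (x : EuclideanSpace ℝ (Fin d)) : ℂ :=
  fderiv ℝ u x (EuclideanSpace.single j (1 : ℝ))

/-- The Laplacian `Δu(x) = ∑ⱼ ∂ⱼ∂ⱼu(x)`. -/
noncomputable def lap {d : ℕ} (u : EuclideanSpace ℝ (Fin d) → ℂ)
    (x : EuclideanSpace ℝ (Fin d)) : ℂ :=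
  ∑ j : Fin d, fderiv ℝ (fun y => fderiv ℝ u y (EuclideanSpace.single j (1 : ℝ))) x
    (EuclideanSpace.single j (1 : ℝ))

lemma starL'_apply' (w : ℂ) : (starL' ℝ : ℂ ≃L[ℝ] ℂ) w = star w := rfl

lemma fderiv_g {d : ℕ} (β : ℝ) (u : EuclideanSpace ℝ (Fin d) → ℂ)
    (y : EuclideanSpace ℝ (Fin d)) (hu : DifferentiableAt ℝ u y)
    (v : EuclideanSpace ℝ (Fin d)) :
    fderiv ℝ (fun z => Complex.I * β * (u z) ^ 2 * (starRingEnd ℂ) (u z)) y v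
      = Complex.I * β * (2 * u y * (starRingEnd ℂ) (u y) * (fderiv ℝ u y v)
        + (u y) ^ 2 * (starRingEnd ℂ) (fderiv ℝ u y v)) := by
  have hD := hu.hasFDerivAt
  have hc : HasFDerivAt (fun z => (starRingEnd ℂ) (u z)) _ y := hD.star
  have h : HasFDerivAt (fun z => Complex.I * (β:ℂ) * (u z * u z) * (starRingEnd ℂ) (u z)) _ y :=
    ((hD.mul hD).const_mul (Complex.I * (β:ℂ))).mul hc
  have heq : (fun z => Complex.I * β * (u z) ^ 2 * (starRingEnd ℂ) (u z))
      = fun z => Complex.I * (β:ℂ) * (u z * u z) * (starRingEnd ℂ) (u z) := by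
    funext z; ring
  rw [heq, h.fderiv]
  simp only [ContinuousLinearMap.add_apply, ContinuousLinearMap.smul_apply,
    ContinuousLinearMap.comp_apply, ContinuousLinearEquiv.coe_coe, starL'_apply',
    smul_eq_mul, starRingEnd_apply, Pi.mul_apply]
  ring

lemma fderiv_inner {d : ℕ} (β : ℝ) (u p : EuclideanSpace ℝ (Fin d) → ℂ)
    (x : EuclideanSpace ℝ (Fin d)) (hu : DifferentiableAt ℝ u x)
    (hp : DifferentiableAt ℝ p x) (v : EuclideanSpace ℝ (Fin d)) :
    fderiv ℝ (fun y => Complex.I * β * (2 * u y * (starRingEnd ℂ) (u y) * p y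
      + (u y) ^ 2 * (starRingEnd ℂ) (p y))) x v
    = Complex.I * β * (2 * (fderiv ℝ u x v * (starRingEnd ℂ) (u x)
        + u x * (starRingEnd ℂ) (fderiv ℝ u x v)) * p x
      + 2 * u x * (starRingEnd ℂ) (u x) * fderiv ℝ p x v
      + 2 * u x * fderiv ℝ u x v * (starRingEnd ℂ) (p x)
      + (u x) ^ 2 * (starRingEnd ℂ) (fderiv ℝ p x v)) := by
  have hD := hu.hasFDerivAt
  have hP := hp.hasFDerivAt
  have hcu : HasFDerivAt (fun z => (starRingEnd ℂ) (u z)) _ x := hD.star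
  have hcp : HasFDerivAt (fun z => (starRingEnd ℂ) (p z)) _ x := hP.star
  have h : HasFDerivAt (fun y => Complex.I * (β:ℂ) * ((2 * u y) * (starRingEnd ℂ) (u y) * p y
      + (u y * u y) * (starRingEnd ℂ) (p y))) _ x :=
    ((((hD.const_mul (2:ℂ)).mul hcu).mul hP).add ((hD.mul hD).mul hcp)).const_mul
    (Complex.I * (β:ℂ))
  have heq : (fun y => Complex.I * β * (2 * u y * (starRingEnd ℂ) (u y) * p y
      + (u y) ^ 2 * (starRingEnd ℂ) (p y)))
      = fun y => Complex.I * (β:ℂ) * ((2 * u y) * (starRingEnd ℂ) (u y) * p y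
      + (u y * u y) * (starRingEnd ℂ) (p y)) := by
    funext z; ring
  rw [heq, h.fderiv]
  simp only [ContinuousLinearMap.add_apply, ContinuousLinearMap.smul_apply,
    ContinuousLinearMap.comp_apply, ContinuousLinearEquiv.coe_coe, starL'_apply',
    smul_eq_mul, starRingEnd_apply, Pi.mul_apply]
  ring


/-- The commutator computation (5.13) for the nonlinear Schrödinger equation: with
`g(v) = iβ v² v̄`, one has
`-iΔ(g∘u)(x) + iβ( u² conj(iΔu) + 2u ū (iΔu) ) = 2β( ū ∇u·∇u + 2u ∇u·∇ū + u² Δū )`. -/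
theorem stmt_19 {d : ℕ} (β : ℝ) (u : EuclideanSpace ℝ (Fin d) → ℂ)
    (hu : ContDiff ℝ 2 u) (x : EuclideanSpace ℝ (Fin d)) :
    -Complex.I * lap (fun y => Complex.I * β * (u y) ^ 2 * (starRingEnd ℂ) (u y)) x +
      Complex.I * β * ((u x) ^ 2 * (starRingEnd ℂ) (Complex.I * lap u x) +
        2 * u x * (starRingEnd ℂ) (u x) * (Complex.I * lap u x)) =
    2 * β * ((starRingEnd ℂ) (u x) * ∑ j : Fin d, (pd u j x) ^ 2 +
      2 * u x * ∑ j : Fin d, pd u j x * (starRingEnd ℂ) (pd u j x) +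
      (u x) ^ 2 * (starRingEnd ℂ) (lap u x)) := by
  have hud : Differentiable ℝ u := hu.differentiable (by norm_num)
  have hfd : ContDiff ℝ 1 (fderiv ℝ u) := hu.fderiv_right (by norm_num)
  have hpd : ∀ j : Fin d, Differentiable ℝ (pd u j) := by
    intro j
    exact (((ContinuousLinearMap.apply ℝ ℂ
      (EuclideanSpace.single j (1:ℝ))).contDiff).comp hfd).differentiable one_ne_zero
  -- rewrite lap of g∘u
  have hlapg : lap (fun y => Complex.I * β * (u y) ^ 2 * (starRingEnd ℂ) (u y)) x
      = ∑ j : Fin d, fderiv ℝ (fun y => Complex.I * β *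
          (2 * u y * (starRingEnd ℂ) (u y) * pd u j y
            + (u y) ^ 2 * (starRingEnd ℂ) (pd u j y))) x (EuclideanSpace.single j (1:ℝ)) := by
    unfold lap
    refine Finset.sum_congr rfl fun j _ => ?_
    have hfun : (fun y => fderiv ℝ (fun z => Complex.I * β * (u z) ^ 2 * (starRingEnd ℂ) (u z))
        y (EuclideanSpace.single j (1:ℝ)))
        = fun y => Complex.I * β * (2 * u y * (starRingEnd ℂ) (u y) * pd u j y
            + (u y) ^ 2 * (starRingEnd ℂ) (pd u j y)) := by
      funext y
      exact fderiv_g β u y (hud y) _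
    rw [hfun]
  rw [hlapg]
  have hsum : ∀ j : Fin d, fderiv ℝ (fun y => Complex.I * β *
        (2 * u y * (starRingEnd ℂ) (u y) * pd u j y
          + (u y) ^ 2 * (starRingEnd ℂ) (pd u j y))) x (EuclideanSpace.single j (1:ℝ))
      = Complex.I * β * (2 * (pd u j x * (starRingEnd ℂ) (u x)
          + u x * (starRingEnd ℂ) (pd u j x)) * pd u j x
        + 2 * u x * (starRingEnd ℂ) (u x) * fderiv ℝ (pd u j) x (EuclideanSpace.single j (1:ℝ))
        + 2 * u x * pd u j x * (starRingEnd ℂ) (pd u j x)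
        + (u x) ^ 2 * (starRingEnd ℂ)
            (fderiv ℝ (pd u j) x (EuclideanSpace.single j (1:ℝ)))) := by
    intro j
    exact fderiv_inner β u (pd u j) x (hud x) (hpd j x) _
  rw [Finset.sum_congr rfl fun j _ => hsum j]
  have hL : ∑ j : Fin d, fderiv ℝ (pd u j) x (EuclideanSpace.single j (1:ℝ)) = lap u x := rfl
  have hLc : ∑ j : Fin d, (starRingEnd ℂ)
      (fderiv ℝ (pd u j) x (EuclideanSpace.single j (1:ℝ))) = (starRingEnd ℂ) (lap u x) := by
    rw [← map_sum, hL]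
  simp only [map_mul, Complex.conj_I]
  have key : ∑ j : Fin d, Complex.I * (β:ℂ) *
        (2 * (pd u j x * (starRingEnd ℂ) (u x) + u x * (starRingEnd ℂ) (pd u j x)) * pd u j x
        + 2 * u x * (starRingEnd ℂ) (u x) * fderiv ℝ (pd u j) x (EuclideanSpace.single j (1:ℝ))
        + 2 * u x * pd u j x * (starRingEnd ℂ) (pd u j x)
        + (u x) ^ 2 * (starRingEnd ℂ)
            (fderiv ℝ (pd u j) x (EuclideanSpace.single j (1:ℝ))))
      = (2 * Complex.I * (β:ℂ) * (starRingEnd ℂ) (u x)) * ∑ j : Fin d, (pd u j x) ^ 2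
        + (4 * Complex.I * (β:ℂ) * u x) * ∑ j : Fin d, pd u j x * (starRingEnd ℂ) (pd u j x)
        + (2 * Complex.I * (β:ℂ) * u x * (starRingEnd ℂ) (u x)) * lap u x
        + (Complex.I * (β:ℂ) * (u x) ^ 2) * (starRingEnd ℂ) (lap u x) := by
    rw [← hLc, ← hL, Finset.mul_sum, Finset.mul_sum, Finset.mul_sum, Finset.mul_sum,
      ← Finset.sum_add_distrib, ← Finset.sum_add_distrib, ← Finset.sum_add_distrib]
    refine Finset.sum_congr rfl fun j _ => ?_
    ring
  rw [key]
  linear_combination (-(β:ℂ) * (2 * (starRingEnd ℂ) (u x) * ∑ j : Fin d, (pd u j x) ^ 2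
    + 4 * u x * ∑ j : Fin d, pd u j x * (starRingEnd ℂ) (pd u j x)
    + 2 * (u x) ^ 2 * (starRingEnd ℂ) (lap u x))) * Complex.I_mul_I
end
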